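/- arXiv:2504.10922 — 9 statements merged into one kernel-verified Lean document; each statement's English description precedes it below -/
import Mathlib

section
/- Let k be a field of characteristic 0, K a field extension of k, and fix integers n, m ≥ 1 and j ≥ 1. Let A = MvPowerSeries (Fin n) k, J ⊆ A an ideal, R = A/J, and R_K = A_K/J_K the corresponding quotient over K, with ι : R → R_K the induced homomorphism and 𝔪 ⊆ R, 𝔪_K ⊆ R_K the ideals generated by the residue classes of the variables. Let f, f̃ : Fin m → R with f_i, f̃_i ∈ 𝔪 for all i. If there exists an invertible m×m matrix C with entries in R_K such that every entry of C − Id lies in 𝔪_K^j and ι(f̃_i) = Σ_l C_{i l} · ι(f_l) for all i, then there exists an invertible m×m matrix C' with entries in R such that every entry of C' − Id lies in 𝔪^j and f̃_i = Σ_l C'_{i l} · f_l for all i. -/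
/- Formal linearized-contact case of Theorem 4.1(1):
unipotent `ℛ^{(j)}`-equivalence over a field extension `K` of a characteristic-zero
field `k` implies `ℛ^{(j)}`-equivalence over `k`, for map-germs on a formal
scheme-germ `Spec R`, `R = k[[x₁,…,xₙ]]/J`. -/

set_option synthInstance.maxHeartbeats 1000000
set_option maxHeartbeats 1000000

noncomputable section

open MvPowerSeries

variable (k K : Type) [Field k] [Field K] [Algebra k K] (n : ℕ)

/-- Coefficient extension `k[[x]] → K[[x]]`. -/
def extHom : MvPowerSeries (Fin n) k →+* MvPowerSeries (Fin n) K :=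
  MvPowerSeries.map (algebraMap k K)

variable (J : Ideal (MvPowerSeries (Fin n) k))

/-- The extended ideal `J_K ⊆ K[[x]]`, generated by the image of `J`. -/
def idealK : Ideal (MvPowerSeries (Fin n) K) := J.map (extHom k K n)

/-- The induced homomorphism `ι : R = k[[x]]/J → R_K = K[[x]]/J_K`. -/
def iotaR : (MvPowerSeries (Fin n) k ⧸ J) →+* (MvPowerSeries (Fin n) K ⧸ idealK k K n J) :=
  Ideal.quotientMap _ (extHom k K n) Ideal.le_comap_map

/-- The residue class `x̄ₐ ∈ R`. -/
def xbar (a : Fin n) : MvPowerSeries (Fin n) k ⧸ J :=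
  Ideal.Quotient.mk J (MvPowerSeries.X a)

/-- The residue class `x̄ₐ ∈ R_K`. -/
def xbarK (a : Fin n) : MvPowerSeries (Fin n) K ⧸ idealK k K n J :=
  Ideal.Quotient.mk (idealK k K n J) (MvPowerSeries.X a)

/-- The ideal `𝔪 ⊆ R` generated by the classes of the variables. -/
def mR : Ideal (MvPowerSeries (Fin n) k ⧸ J) := Ideal.span (Set.range (xbar k n J))

/-- The ideal `𝔪_K ⊆ R_K` generated by the classes of the variables. -/
def mRK : Ideal (MvPowerSeries (Fin n) K ⧸ idealK k K n J) :=
  Ideal.span (Set.range (xbarK k K n J))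

/-! ### Auxiliary: coefficientwise retraction `K[[x]] → k[[x]]` -/

section Retraction

variable {k K : Type} [Field k] [Field K] [Algebra k K] {n : ℕ}

/-- Coefficientwise application of a `k`-linear retraction `K → k`. -/
def PhatL (pr : K →ₗ[k] k) :
    MvPowerSeries (Fin n) K →ₗ[k] MvPowerSeries (Fin n) k where
  toFun g := fun d => pr (g d)
  map_add' g h := funext fun d => pr.map_add _ _
  map_smul' c g := funext fun d => pr.map_smul c _

lemma coeff_PhatL (pr : K →ₗ[k] k) (g : MvPowerSeries (Fin n) K) (d : Fin n →₀ ℕ) :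
    MvPowerSeries.coeff d (PhatL pr g) = pr (MvPowerSeries.coeff d g) := rfl

lemma PhatL_ext (pr : K →ₗ[k] k) (hpr : ∀ c : k, pr (algebraMap k K c) = c)
    (a : MvPowerSeries (Fin n) k) : PhatL pr (extHom k K n a) = a := by
  ext d
  rw [coeff_PhatL]
  show pr (MvPowerSeries.coeff d (MvPowerSeries.map (algebraMap k K) a)) = _
  rw [MvPowerSeries.coeff_map, hpr]

lemma PhatL_mul_ext (pr : K →ₗ[k] k) (g : MvPowerSeries (Fin n) K)
    (a : MvPowerSeries (Fin n) k) :
    PhatL pr (g * extHom k K n a) = PhatL pr g * a := by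
  classical
  ext d
  rw [coeff_PhatL, MvPowerSeries.coeff_mul, MvPowerSeries.coeff_mul, map_sum]
  refine Finset.sum_congr rfl fun x _ => ?_
  show pr (MvPowerSeries.coeff x.1 g *
      MvPowerSeries.coeff x.2 (MvPowerSeries.map (algebraMap k K) a)) = _
  rw [MvPowerSeries.coeff_map]
  have : MvPowerSeries.coeff x.1 g * algebraMap k K (MvPowerSeries.coeff x.2 a)
      = (MvPowerSeries.coeff x.2 a) • (MvPowerSeries.coeff x.1 g) := by
    rw [Algebra.smul_def, mul_comm]
  rw [this, pr.map_smul, smul_eq_mul, mul_comm]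
  rfl

lemma PhatL_mul_mem (pr : K →ₗ[k] k)
    (I : Ideal (MvPowerSeries (Fin n) k)) {x : MvPowerSeries (Fin n) K}
    (hx : x ∈ I.map (extHom k K n)) :
    ∀ g : MvPowerSeries (Fin n) K, PhatL pr (g * x) ∈ I := by
  have hx' : x ∈ Submodule.span (MvPowerSeries (Fin n) K)
      ((extHom k K n) '' (I : Set (MvPowerSeries (Fin n) k))) := hx
  refine Submodule.span_induction
    (p := fun x _ => ∀ g : MvPowerSeries (Fin n) K, PhatL pr (g * x) ∈ I)
    ?_ ?_ ?_ ?_ hx'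
  · rintro _ ⟨a, ha, rfl⟩ g
    rw [PhatL_mul_ext]
    exact I.mul_mem_left _ ha
  · intro g; rw [mul_zero, map_zero]; exact I.zero_mem
  · intro x y _ _ ihx ihy g
    rw [mul_add, map_add]
    exact I.add_mem (ihx g) (ihy g)
  · intro r x _ ih g
    rw [smul_eq_mul, ← mul_assoc]
    exact ih (g * r)

lemma PhatL_mem (pr : K →ₗ[k] k)
    (I : Ideal (MvPowerSeries (Fin n) k)) {x : MvPowerSeries (Fin n) K}
    (hx : x ∈ I.map (extHom k K n)) : PhatL pr x ∈ I := by
  simpa using PhatL_mul_mem pr I hx 1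

end Retraction

theorem linearized_contact_equiv_descends_filtered
    [CharZero k] (m j : ℕ) (hn : 1 ≤ n) (hm : 1 ≤ m) (hj : 1 ≤ j)
    (f ft : Fin m → (MvPowerSeries (Fin n) k ⧸ J))
    (hf : ∀ i, f i ∈ mR k n J) (hft : ∀ i, ft i ∈ mR k n J)
    (H : ∃ C : GL (Fin m) (MvPowerSeries (Fin n) K ⧸ idealK k K n J),
        (∀ i l, ((C : Matrix (Fin m) (Fin m) (MvPowerSeries (Fin n) K ⧸ idealK k K n J))
            - 1) i l ∈ (mRK k K n J) ^ j) ∧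
        (∀ i, iotaR k K n J (ft i) =
          ∑ l, (C : Matrix (Fin m) (Fin m) (MvPowerSeries (Fin n) K ⧸ idealK k K n J)) i l
            * iotaR k K n J (f l))) :
    ∃ C' : GL (Fin m) (MvPowerSeries (Fin n) k ⧸ J),
      (∀ i l, ((C' : Matrix (Fin m) (Fin m) (MvPowerSeries (Fin n) k ⧸ J)) - 1) i l
          ∈ (mR k n J) ^ j) ∧
      (∀ i, ft i =
        ∑ l, (C' : Matrix (Fin m) (Fin m) (MvPowerSeries (Fin n) k ⧸ J)) i l * f l) := by
  classical
  obtain ⟨C, hCm, hCrel⟩ := H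
  -- a k-linear retraction K → k
  obtain ⟨pr, hprc⟩ := (Algebra.linearMap k K).exists_leftInverse_of_injective
    (LinearMap.ker_eq_bot.mpr (by exact (algebraMap k K).injective))
  have hpr : ∀ c : k, pr (algebraMap k K c) = c := fun c => LinearMap.congr_fun hprc c
  -- the ideals generated by the variables upstairs
  set IX : Ideal (MvPowerSeries (Fin n) k) :=
    Ideal.span (Set.range MvPowerSeries.X) with hIX
  set IXK : Ideal (MvPowerSeries (Fin n) K) :=
    Ideal.span (Set.range MvPowerSeries.X) with hIXK
  have hmapIX : IX.map (extHom k K n) = IXK := by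
    rw [hIX, hIXK, Ideal.map_span, ← Set.range_comp]
    exact congrArg _ (congrArg Set.range (funext fun s =>
      by exact MvPowerSeries.map_X (algebraMap k K) s))
  have hmR' : mR k n J = IX.map (Ideal.Quotient.mk J) := by
    rw [hIX, Ideal.map_span, ← Set.range_comp]; rfl
  have hmRK' : mRK k K n J = IXK.map (Ideal.Quotient.mk (idealK k K n J)) := by
    rw [hIXK, Ideal.map_span, ← Set.range_comp]; rfl
  have hmRj : (mR k n J) ^ j = (IX ^ j).map (Ideal.Quotient.mk J) := by
    rw [hmR', ← Ideal.map_pow]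
  have hmKj : (mRK k K n J) ^ j
      = ((IX ^ j).map (extHom k K n)).map (Ideal.Quotient.mk (idealK k K n J)) := by
    rw [hmRK', ← Ideal.map_pow, ← hmapIX, ← Ideal.map_pow]
  -- lifts of the matrix entries
  have hCm' : ∀ i l, ∃ v, v ∈ (IX ^ j).map (extHom k K n) ∧
      Ideal.Quotient.mk (idealK k K n J) v
        = ((C : Matrix (Fin m) (Fin m) (MvPowerSeries (Fin n) K ⧸ idealK k K n J)) - 1) i l := by
    intro i l
    have h := hCm i l
    rw [hmKj] at h
    exact (Ideal.mem_map_iff_of_surjective _ Ideal.Quotient.mk_surjective).mp h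
  choose u hu1 hu2 using hCm'
  -- lifts of f, ft
  choose F hF using fun i => Ideal.Quotient.mk_surjective (f i)
  choose Ft hFt using fun i => Ideal.Quotient.mk_surjective (ft i)
  set Chat : Fin m → Fin m → MvPowerSeries (Fin n) K :=
    fun i l => u i l + extHom k K n (if i = l then 1 else 0) with hChatdef
  have hmkChat : ∀ i l, Ideal.Quotient.mk (idealK k K n J) (Chat i l)
      = (C : Matrix (Fin m) (Fin m) (MvPowerSeries (Fin n) K ⧸ idealK k K n J)) i l := by
    intro i l
    show Ideal.Quotient.mk (idealK k K n J) (u i l + extHom k K n (if i = l then 1 else 0)) = _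
    rw [map_add, hu2]
    have h1 : Ideal.Quotient.mk (idealK k K n J) (extHom k K n (if i = l then 1 else 0))
        = (1 : Matrix (Fin m) (Fin m) (MvPowerSeries (Fin n) K ⧸ idealK k K n J)) i l := by
      by_cases h : i = l <;> simp [h, Matrix.one_apply]
    rw [h1, Matrix.sub_apply, sub_add_cancel]
  set D : Fin m → Fin m → MvPowerSeries (Fin n) k :=
    fun i l => PhatL pr (Chat i l) with hDdef
  have hD : ∀ i l, D i l = PhatL pr (u i l) + (if i = l then (1 : MvPowerSeries (Fin n) k) else 0) := by
    intro i l
    show PhatL pr (u i l + extHom k K n (if i = l then 1 else 0)) = _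
    rw [map_add, PhatL_ext pr hpr]
  have hDu : ∀ i l, PhatL pr (u i l) ∈ IX ^ j := fun i l => PhatL_mem pr _ (hu1 i l)
  set C'mat : Matrix (Fin m) (Fin m) (MvPowerSeries (Fin n) k ⧸ J) :=
    fun i l => Ideal.Quotient.mk J (D i l) with hC'def
  have hC'entry : ∀ i l, (C'mat - 1) i l ∈ (mR k n J) ^ j := by
    intro i l
    have h1 : (C'mat - 1) i l = Ideal.Quotient.mk J (PhatL pr (u i l)) := by
      rw [Matrix.sub_apply]
      show Ideal.Quotient.mk J (D i l)
        - (1 : Matrix (Fin m) (Fin m) (MvPowerSeries (Fin n) k ⧸ J)) i l = _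
      rw [hD, map_add, Matrix.one_apply]
      by_cases h : i = l <;> simp [h]
    rw [h1, hmRj]
    exact Ideal.mem_map_of_mem _ (hDu i l)
  have hiota : ∀ a : MvPowerSeries (Fin n) k, iotaR k K n J (Ideal.Quotient.mk J a)
      = Ideal.Quotient.mk (idealK k K n J) (extHom k K n a) := fun a => Ideal.quotientMap_mk
  -- the descended relation
  have hrel : ∀ i, ft i = ∑ l, C'mat i l * f l := by
    intro i
    have h1 : Ideal.Quotient.mk (idealK k K n J) (extHom k K n (Ft i))
        = Ideal.Quotient.mk (idealK k K n J) (∑ l, Chat i l * extHom k K n (F l)) := by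
      rw [← hiota, hFt, hCrel i, map_sum]
      refine Finset.sum_congr rfl fun l _ => ?_
      rw [map_mul, hmkChat, ← hF l, hiota]
    have h2 : extHom k K n (Ft i) - ∑ l, Chat i l * extHom k K n (F l) ∈ idealK k K n J :=
      Ideal.Quotient.eq.mp h1
    have h3 : Ft i - ∑ l, D i l * F l ∈ J := by
      have h4 := PhatL_mem pr J h2
      rw [map_sub, PhatL_ext pr hpr, map_sum] at h4
      have h5 : ∀ l, PhatL pr (Chat i l * extHom k K n (F l)) = D i l * F l :=
        fun l => PhatL_mul_ext pr _ _
      simp only [h5] at h4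
      exact h4
    have h6 : Ideal.Quotient.mk J (Ft i) = Ideal.Quotient.mk J (∑ l, D i l * F l) :=
      Ideal.Quotient.eq.mpr h3
    rw [← hFt i, h6, map_sum]
    exact Finset.sum_congr rfl fun l _ => by rw [map_mul, hF l]
  -- invertibility of C'mat
  have hdet : IsUnit C'mat.det := by
    have hq : (Ideal.Quotient.mk (mR k n J)).mapMatrix C'mat = 1 := by
      ext i l
      rw [RingHom.mapMatrix_apply, Matrix.map_apply]
      have hmem : C'mat i l - (1 : Matrix (Fin m) (Fin m) (MvPowerSeries (Fin n) k ⧸ J)) i l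
          ∈ mR k n J := by
        refine Ideal.pow_le_self (Nat.one_le_iff_ne_zero.mp hj) ?_
        simpa [Matrix.sub_apply] using hC'entry i l
      have heq : Ideal.Quotient.mk (mR k n J) (C'mat i l)
          = Ideal.Quotient.mk (mR k n J)
            ((1 : Matrix (Fin m) (Fin m) (MvPowerSeries (Fin n) k ⧸ J)) i l) :=
        Ideal.Quotient.eq.mpr hmem
      rw [heq, Matrix.one_apply, Matrix.one_apply]
      split <;> simp
    have hdet1 : Ideal.Quotient.mk (mR k n J) C'mat.det = 1 := by
      have h := RingHom.map_det (S := (MvPowerSeries (Fin n) k ⧸ J) ⧸ mR k n J)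
        (Ideal.Quotient.mk (mR k n J)) C'mat
      rw [hq, Matrix.det_one] at h
      exact h
    have hmem : C'mat.det - 1 ∈ mR k n J :=
      Ideal.Quotient.eq.mp (by rw [map_one]; exact hdet1)
    have hmem' : C'mat.det - 1 ∈ IX.map (Ideal.Quotient.mk J) := by rw [← hmR']; exact hmem
    obtain ⟨v, hv, hveq⟩ :=
      (Ideal.mem_map_iff_of_surjective _ Ideal.Quotient.mk_surjective).mp hmem'
    have hvunit : IsUnit ((1 : MvPowerSeries (Fin n) k) + v) := by
      rw [MvPowerSeries.isUnit_iff_constantCoeff]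
      have hv0 : MvPowerSeries.constantCoeff (σ := Fin n) (R := k) v = 0 := by
        have hle : IX ≤ RingHom.ker (MvPowerSeries.constantCoeff (σ := Fin n) (R := k)) := by
          rw [hIX, Ideal.span_le]
          rintro _ ⟨s, rfl⟩
          simp [RingHom.mem_ker, MvPowerSeries.constantCoeff_X]
        exact hle hv
      simp [hv0]
    have hdeteq : C'mat.det = Ideal.Quotient.mk J (1 + v) := by
      rw [map_add, map_one, hveq]
      ring
    rw [hdeteq]
    exact hvunit.map _
  have hCU : IsUnit C'mat := (Matrix.isUnit_iff_isUnit_det _).mpr hdet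
  refine ⟨hCU.unit, ?_, ?_⟩
  · intro i l
    simpa only [IsUnit.unit_spec] using hC'entry i l
  · intro i
    simpa only [IsUnit.unit_spec] using hrel i
end
end

section
/- Let k be an algebraically closed field (of arbitrary characteristic), K a field extension of k, and fix integers n, m ≥ 1. Let f, f̃ : Fin m → MvPowerSeries (Fin n) k be tuples with constantCoeff f_i = 0 and constantCoeff f̃_i = 0 for all i, and let ι denote the coefficient extension to MvPowerSeries (Fin n) K. If there exists an invertible m×m matrix C with entries in MvPowerSeries (Fin n) K such that ι(f̃_i) = Σ_l C_{i l} · ι(f_l) for all i, then there exists an invertible m×m matrix C' with entries in MvPowerSeries (Fin n) k such that f̃_i = Σ_l C'_{i l} · f_l for all i. -/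
/- Formal linearized-contact (𝒞) case of Theorem 4.1(2): for an algebraically
closed field `k` (any characteristic) and any field extension `k ⊆ K`,
𝒞-equivalence (matrix multiplication by an invertible matrix over the source ring)
over `K` implies 𝒞-equivalence over `k`. -/

set_option synthInstance.maxHeartbeats 1000000
set_option maxHeartbeats 1000000

noncomputable section

open MvPowerSeries

section Aux

variable {k K : Type} [Field k] [Field K] [Algebra k K] {n : ℕ}

/-- Apply a `k`-linear functional `K → k` coefficientwise to a power series. -/
def coeffwise (p : K →ₗ[k] k) : MvPowerSeries (Fin n) K →+ MvPowerSeries (Fin n) k where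
  toFun φ := fun d => p (φ d)
  map_zero' := funext fun _ => map_zero p
  map_add' _ _ := funext fun _ => map_add p _ _

lemma coeff_coeffwise (p : K →ₗ[k] k) (φ : MvPowerSeries (Fin n) K) (d : Fin n →₀ ℕ) :
    coeff (R := k) d (coeffwise p φ) = p (coeff (R := K) d φ) := rfl

lemma constantCoeff_coeffwise (p : K →ₗ[k] k) (φ : MvPowerSeries (Fin n) K) :
    constantCoeff (σ := Fin n) (R := k) (coeffwise p φ) = p (constantCoeff (σ := Fin n) (R := K) φ) := rfl

lemma coeffwise_map (p : K →ₗ[k] k) (g : MvPowerSeries (Fin n) k) :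
    coeffwise p (map (algebraMap k K) g) = C (σ := Fin n) (R := k) (p 1) * g := by
  ext d
  rw [coeff_coeffwise, coeff_C_mul, coeff_map, Algebra.algebraMap_eq_smul_one, map_smul,
    smul_eq_mul, mul_comm]

lemma coeffwise_mul_map (p : K →ₗ[k] k) (φ : MvPowerSeries (Fin n) K)
    (g : MvPowerSeries (Fin n) k) :
    coeffwise p (φ * map (algebraMap k K) g) = coeffwise p φ * g := by
  ext d
  classical
  rw [coeff_coeffwise, coeff_mul, coeff_mul, map_sum]
  refine Finset.sum_congr rfl fun q _ => ?_
  rw [coeff_map, coeff_coeffwise, mul_comm, ← Algebra.smul_def, map_smul, smul_eq_mul, mul_comm]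

end Aux

theorem linearized_contact_equiv_descends_of_isAlgClosed
    (k K : Type) [Field k] [IsAlgClosed k] [Field K] [Algebra k K]
    (n m : ℕ) (hn : 1 ≤ n) (hm : 1 ≤ m)
    (f ft : Fin m → MvPowerSeries (Fin n) k)
    (hf : ∀ i, constantCoeff (f i) = 0)
    (hft : ∀ i, constantCoeff (ft i) = 0)
    (H : ∃ C : GL (Fin m) (MvPowerSeries (Fin n) K),
        ∀ i, map (algebraMap k K) (ft i) =
          ∑ l, (C : Matrix (Fin m) (Fin m) (MvPowerSeries (Fin n) K)) i l
            * map (algebraMap k K) (f l)) :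
    ∃ C' : GL (Fin m) (MvPowerSeries (Fin n) k),
      ∀ i, ft i =
        ∑ l, (C' : Matrix (Fin m) (Fin m) (MvPowerSeries (Fin n) k)) i l * f l := by
  classical
  obtain ⟨Cu, hC⟩ := H
  set x : Matrix (Fin m) (Fin m) (MvPowerSeries (Fin n) K) := (Cu : Matrix (Fin m) (Fin m) (MvPowerSeries (Fin n) K)) with hxdef
  set b := Module.Basis.ofVectorSpace k K with hbdef
  set J := Module.Basis.ofVectorSpaceIndex k K with hJdef
  set p : J → (K →ₗ[k] k) := fun j => b.coord j with hpdef
  -- the homogeneous/inhomogeneous solutions over k obtained by applying coordinates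
  have hsol : ∀ (j : J) (i : Fin m),
      ∑ l, coeffwise (p j) (x i l) * f l = C (σ := Fin n) (R := k) (p j 1) * ft i := by
    intro j i
    rw [← coeffwise_map (p j) (ft i), hC i, map_sum]
    exact Finset.sum_congr rfl fun l _ => (coeffwise_mul_map _ _ _).symm
  -- finite set of coordinates involved
  set F : Finset J := (b.repr 1).support ∪
      Finset.univ.biUnion (fun il : Fin m × Fin m =>
        (b.repr (constantCoeff (σ := Fin n) (R := K) (x il.1 il.2))).support) with hFdef
  have key : ∀ v : K, (b.repr v).support ⊆ F → ∑ j ∈ F, b.repr v j • (b j : K) = v := by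
    intro v hv
    conv_rhs => rw [← b.linearCombination_repr v]
    rw [Finsupp.linearCombination_apply,
      Finsupp.sum_of_support_subset _ hv _ (fun i _ => zero_smul k (b i : K))]
  have hp1 : ∀ j, p j 1 = b.repr 1 j := fun j => rfl
  have hpx : ∀ (i l : Fin m) (j : J),
      p j (constantCoeff (σ := Fin n) (R := K) (x i l)) = b.repr (constantCoeff (σ := Fin n) (R := K) (x i l)) j :=
    fun i l j => rfl
  -- the determinant of the constant-term matrix of x is nonzero
  have hdetx : (x.map (constantCoeff (σ := Fin n) (R := K))).det ≠ 0 := by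
    have hux : IsUnit x.det := (Matrix.isUnit_iff_isUnit_det x).mp Cu.isUnit
    have := hux.map (constantCoeff (σ := Fin n) (R := K))
    rw [RingHom.map_det] at this
    exact this.ne_zero
  -- the polynomial witnessing genericity
  set Q : MvPolynomial J k :=
    (∑ j ∈ F, MvPolynomial.C (p j 1) * MvPolynomial.X j) *
      (Matrix.of fun i l : Fin m =>
        ∑ j ∈ F, MvPolynomial.C (p j (constantCoeff (σ := Fin n) (R := K) (x i l))) * MvPolynomial.X j).det
    with hQdef
  have haQ : MvPolynomial.aeval (fun j : J => (b j : K)) Q ≠ 0 := by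
    have e1 : MvPolynomial.aeval (fun j : J => (b j : K))
        (∑ j ∈ F, MvPolynomial.C (p j 1) * MvPolynomial.X j) = 1 := by
      rw [map_sum]
      have : ∀ j ∈ F, MvPolynomial.aeval (fun j : J => (b j : K))
          (MvPolynomial.C (p j 1) * MvPolynomial.X j) = b.repr 1 j • (b j : K) := by
        intro j _
        rw [map_mul, MvPolynomial.aeval_C, MvPolynomial.aeval_X, Algebra.smul_def, hp1]
      rw [Finset.sum_congr rfl this, key 1 (Finset.subset_union_left)]
    have e2 : MvPolynomial.aeval (fun j : J => (b j : K))
        ((Matrix.of fun i l : Fin m =>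
          ∑ j ∈ F, MvPolynomial.C (p j (constantCoeff (σ := Fin n) (R := K) (x i l)))
            * MvPolynomial.X j).det)
        = (x.map (constantCoeff (σ := Fin n) (R := K))).det := by
      rw [AlgHom.map_det]
      congr 1
      ext i l
      simp only [AlgHom.mapMatrix_apply, Matrix.map_apply, Matrix.of_apply, map_sum]
      have : ∀ j ∈ F, MvPolynomial.aeval (fun j : J => (b j : K))
          (MvPolynomial.C (p j (constantCoeff (σ := Fin n) (R := K) (x i l))) * MvPolynomial.X j)
          = b.repr (constantCoeff (σ := Fin n) (R := K) (x i l)) j • (b j : K) := by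
        intro j _
        rw [map_mul, MvPolynomial.aeval_C, MvPolynomial.aeval_X, Algebra.smul_def, hpx]
      rw [Finset.sum_congr rfl this,
        key _ (le_trans (by
          intro j hj
          exact Finset.mem_biUnion.mpr ⟨(i, l), Finset.mem_univ _, hj⟩)
          Finset.subset_union_right)]
    rw [hQdef, map_mul, e1, e2, one_mul]
    exact hdetx
  have hQ0 : Q ≠ 0 := fun h => haQ (by rw [h, map_zero])
  -- find a k-rational point where Q does not vanish
  have hcex : ∃ c : J → k, MvPolynomial.eval c Q ≠ 0 := by
    by_contra hall
    push_neg at hall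
    exact hQ0 (MvPolynomial.funext fun c => by rw [hall c, map_zero])
  obtain ⟨c, hc⟩ := hcex
  -- unpack the evaluation
  have heval : MvPolynomial.eval c Q =
      (∑ j ∈ F, p j 1 * c j) *
        (Matrix.of fun i l : Fin m =>
          ∑ j ∈ F, p j (constantCoeff (σ := Fin n) (R := K) (x i l)) * c j).det := by
    rw [hQdef, map_mul]
    congr 1
    · rw [map_sum]
      exact Finset.sum_congr rfl fun j _ => by
        rw [map_mul, MvPolynomial.eval_C, MvPolynomial.eval_X]
    · rw [RingHom.map_det]
      congr 1
      ext i l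
      simp only [RingHom.mapMatrix_apply, Matrix.map_apply, Matrix.of_apply, map_sum]
      exact Finset.sum_congr rfl fun j _ => by
        rw [map_mul, MvPolynomial.eval_C, MvPolynomial.eval_X]
  set μ : k := ∑ j ∈ F, p j 1 * c j with hμdef
  set N : Matrix (Fin m) (Fin m) k :=
    Matrix.of fun i l : Fin m =>
      ∑ j ∈ F, p j (constantCoeff (σ := Fin n) (R := K) (x i l)) * c j with hNdef
  rw [heval] at hc
  have hμ : μ ≠ 0 := fun h => hc (by rw [h, zero_mul])
  have hδ : N.det ≠ 0 := fun h => hc (by rw [h, mul_zero])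
  -- the matrix over k
  set E : Matrix (Fin m) (Fin m) (MvPowerSeries (Fin n) k) :=
    Matrix.of fun i l : Fin m =>
      C (σ := Fin n) (R := k) μ⁻¹ * ∑ j ∈ F, C (σ := Fin n) (R := k) (c j) * coeffwise (p j) (x i l) with hEdef
  have hEsol : ∀ i, ∑ l, E i l * f l = ft i := by
    intro i
    have step1 : ∑ l, E i l * f l
        = ∑ l, ∑ j ∈ F,
            C (σ := Fin n) (R := k) μ⁻¹ * (C (σ := Fin n) (R := k) (c j) * (coeffwise (p j) (x i l) * f l)) := by
      refine Finset.sum_congr rfl fun l _ => ?_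
      rw [hEdef, Matrix.of_apply, Finset.mul_sum, Finset.sum_mul]
      exact Finset.sum_congr rfl fun j _ => by ring
    rw [step1, Finset.sum_comm]
    have step2 : ∀ j ∈ F,
        (∑ l, C (σ := Fin n) (R := k) μ⁻¹ * (C (σ := Fin n) (R := k) (c j) * (coeffwise (p j) (x i l) * f l)))
        = C (σ := Fin n) (R := k) (μ⁻¹ * (c j * p j 1)) * ft i := by
      intro j _
      rw [← Finset.mul_sum, ← Finset.mul_sum, hsol j i, map_mul, map_mul]
      ring
    rw [Finset.sum_congr rfl step2, ← Finset.sum_mul, ← map_sum]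
    have hsum1 : ∑ j ∈ F, μ⁻¹ * (c j * p j 1) = 1 := by
      rw [← Finset.mul_sum,
        show ∑ j ∈ F, c j * p j 1 = μ from by
          rw [hμdef]; exact Finset.sum_congr rfl fun j _ => mul_comm _ _,
        inv_mul_cancel₀ hμ]
    rw [hsum1, map_one, one_mul]
  -- constant term of E
  have hmapE : E.map (constantCoeff (σ := Fin n) (R := k)) = μ⁻¹ • N := by
    ext i l
    rw [Matrix.map_apply, hEdef, Matrix.of_apply, map_mul, constantCoeff_C, map_sum,
      Matrix.smul_apply, hNdef, Matrix.of_apply, smul_eq_mul]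
    congr 1
    refine Finset.sum_congr rfl fun j _ => ?_
    rw [map_mul, constantCoeff_C, constantCoeff_coeffwise, mul_comm]
  have hccdet : constantCoeff (σ := Fin n) (R := k) E.det = μ⁻¹ ^ m * N.det := by
    rw [RingHom.map_det, RingHom.mapMatrix_apply, hmapE, Matrix.det_smul, Fintype.card_fin]
  have hdetE : IsUnit E.det := by
    rw [MvPowerSeries.isUnit_iff_constantCoeff, hccdet]
    exact (mul_ne_zero (pow_ne_zero _ (inv_ne_zero hμ)) hδ).isUnit
  have hUE : IsUnit E := (Matrix.isUnit_iff_isUnit_det E).mpr hdetE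
  refine ⟨hUE.unit, fun i => ?_⟩
  have hcoe : (hUE.unit : Matrix (Fin m) (Fin m) (MvPowerSeries (Fin n) k)) = E :=
    hUE.unit_spec
  rw [hcoe]
  exact (hEsol i).symm
end
end

section
/- Let k be an algebraically closed field which is uncountable, K a field extension of k, and fix integers n, m ≥ 1. Let f, f̃ : Fin m → MvPowerSeries (Fin n) k with constantCoeff f_i = 0 and constantCoeff f̃_i = 0 for all i, and write ι for the coefficient extension to K (in both the n source variables and the m target variables). Suppose there exist tuples Φ : Fin n → MvPowerSeries (Fin n) K and Ψ : Fin m → MvPowerSeries (Fin m) K such that: each Φ_a and each Ψ_i has zero constant coefficient; the n×n matrix of linear coefficients of Φ (entry (a,b) being the coefficient of X_b in Φ_a) is invertible, and similarly the m×m matrix of linear coefficients of Ψ is invertible; and for every i, MvPowerSeries.subst (fun l => ι(f_l)) Ψ_i = MvPowerSeries.subst Φ (ι(f̃_i)). Then there exist tuples Φ' : Fin n → MvPowerSeries (Fin n) k and Ψ' : Fin m → MvPowerSeries (Fin m) k with the same properties over k (zero constant coefficients and invertible linear parts) such that MvPowerSeries.subst f Ψ'_i = MvPowerSeries.subst Φ'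 f̃_i for every i. -/
/- Formal left-right case (smooth source and target) of Theorem 4.1(2): over an
uncountable algebraically closed field `k` (which is ℵ₀-complete, as required by
the Strong Artin approximation), left-right equivalence of formal map-germs over
any field extension `K` implies left-right equivalence over `k`. -/

set_option synthInstance.maxHeartbeats 1000000
set_option maxHeartbeats 1000000

noncomputable section

namespace MvPowerSeries

/-- Substitution of a tuple `g` of power series (each with zero constant coefficient)
into a power series `f`: the coefficient of the result at a multi-index `d` is
`∑ₑ (coeff e f) · coeff d (∏ i, (g i)^(e i))`, the sum running over the (sufficient)
finite set of exponents `e` bounded by the total degree of `d`. -/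
def subst' {σ τ R : Type} [Fintype σ] [DecidableEq σ] [Fintype τ] [CommRing R]
    (g : σ → MvPowerSeries τ R) (f : MvPowerSeries σ R) : MvPowerSeries τ R :=
  fun d => ∑ e ∈ Finset.Iic (Finsupp.equivFunOnFinite.symm fun _ : σ => ∑ i, d i),
    MvPowerSeries.coeff e f * MvPowerSeries.coeff d (∏ i, g i ^ e i)

/-- The matrix of linear (degree-one) coefficients of a tuple of power series:
entry `(a, b)` is the coefficient of `X b` in the `a`-th component. -/
def linearPart {σ τ R : Type} [Fintype σ] [Fintype τ] [CommRing R]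
    (Φ : σ → MvPowerSeries τ R) : Matrix σ τ R :=
  Matrix.of fun a b => MvPowerSeries.coeff (Finsupp.single b 1) (Φ a)

end MvPowerSeries

open MvPowerSeries

section Aux

open Cardinal

lemma countable_lists {M : Type*} {s : Set M} (hs : s.Countable) :
    {l : List M | ∀ x ∈ l, x ∈ s}.Countable := by
  have := hs.to_subtype
  have h : {l : List M | ∀ x ∈ l, x ∈ s} ⊆
      Set.range (fun L : List s => L.map Subtype.val) := by
    intro l hl
    refine ⟨l.pmap (fun x hx => ⟨x, hx⟩) hl, ?_⟩
    simp [List.map_pmap]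
  exact (Set.countable_range _).mono h

theorem isAlgebraic_of_adjoin_countable {k F : Type} [Field k] [Uncountable k]
    [Field F] [Algebra k F] {S : Set F} (hS : S.Countable)
    (h : Algebra.adjoin k S = ⊤) : Algebra.IsAlgebraic k F := by
  refine ⟨fun x => ?_⟩
  by_contra hx
  have ht : Transcendental k x := hx
  have h1 : #k ≤ Module.rank k F := by
    simpa using ht.linearIndependent_sub_inv.cardinal_lift_le_rank
  have hsp : Submodule.span k ((Submonoid.closure S : Submonoid F) : Set F) = ⊤ := by
    have := Algebra.adjoin_eq_span k S
    rw [h] at this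
    exact this.symm
  have hc : ((Submonoid.closure S : Submonoid F) : Set F).Countable := by
    rw [Submonoid.closure_eq_image_prod]
    exact (countable_lists hS).image _
  have h2 : Module.rank k F ≤ ℵ₀ := by
    calc Module.rank k F = Module.rank k (⊤ : Submodule k F) := (rank_top k F).symm
      _ = Module.rank k (Submodule.span k ((Submonoid.closure S : Submonoid F) : Set F)) := by
          rw [hsp]
      _ ≤ #((Submonoid.closure S : Submonoid F) : Set F) := rank_span_le _
      _ ≤ ℵ₀ := by rw [Cardinal.mk_le_aleph0_iff]; exact hc.to_subtype
  exact absurd (h1.trans h2) (not_le.mpr (Cardinal.aleph0_lt_mk (α := k)))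

theorem exists_algHom_adjoin_countable (k : Type) [Field k] [IsAlgClosed k] [Uncountable k]
    {K : Type} [Field K] [Algebra k K] {S : Set K} (hS : S.Countable) :
    Nonempty ((Algebra.adjoin k S) →ₐ[k] k) := by
  set A := Algebra.adjoin k S with hA
  obtain ⟨mx, hmx⟩ := Ideal.exists_maximal A
  letI := hmx
  letI : Field (A ⧸ mx) := Ideal.Quotient.field mx
  have hgen : Algebra.adjoin k ((Ideal.Quotient.mkₐ k mx) ''
      ((Subtype.val : A → K) ⁻¹' S)) = ⊤ := by
    rw [← AlgHom.map_adjoin, Algebra.adjoin_adjoin_coe_preimage, Algebra.map_top]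
    exact (AlgHom.range_eq_top _).mpr (Ideal.Quotient.mkₐ_surjective k mx)
  have halg : Algebra.IsAlgebraic k (A ⧸ mx) :=
    isAlgebraic_of_adjoin_countable ((hS.preimage Subtype.val_injective).image _) hgen
  letI : Module.IsTorsionFree k (A ⧸ mx) :=
    Module.isTorsionFree_iff_algebraMap_injective.mpr (algebraMap k (A ⧸ mx)).injective
  letI : Module.IsTorsionFree k k :=
    Module.isTorsionFree_iff_algebraMap_injective.mpr (algebraMap k k).injective
  exact ⟨(IsAlgClosed.lift : (A ⧸ mx) →ₐ[k] k).comp (Ideal.Quotient.mkₐ k mx)⟩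

namespace MvPowerSeries

lemma coeff_subst'' {σ τ R : Type} [Fintype σ] [DecidableEq σ] [Fintype τ] [CommRing R]
    (g : σ → MvPowerSeries τ R) (f : MvPowerSeries σ R) (d : τ →₀ ℕ) :
    coeff d (subst' g f) =
      ∑ e ∈ Finset.Iic (Finsupp.equivFunOnFinite.symm fun _ : σ => ∑ i, d i),
        coeff e f * coeff d (∏ i, g i ^ e i) := rfl

lemma map_subst' {σ τ R S : Type} [Fintype σ] [DecidableEq σ] [Fintype τ]
    [CommRing R] [CommRing S] (χ : R →+* S)
    (g : σ → MvPowerSeries τ R) (h : MvPowerSeries σ R) :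
    map χ (subst' g h) = subst' (fun i => map χ (g i)) (map χ h) := by
  ext d
  rw [coeff_map, coeff_subst'', coeff_subst'', map_sum]
  refine Finset.sum_congr rfl fun e _ => ?_
  have hp : (∏ i, (map χ (g i)) ^ (e i)) = map χ (∏ i, g i ^ e i) := by
    rw [map_prod]
    exact Finset.prod_congr rfl fun i _ => (map_pow _ _ _).symm
  rw [hp, coeff_map, coeff_map, map_mul]

lemma map_injective' {σ R S : Type} [CommRing R] [CommRing S] (χ : R →+* S)
    (hχ : Function.Injective χ) : Function.Injective (map (σ := σ) χ) := by
  intro F G h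
  ext d
  apply hχ
  have := congrArg (coeff d) h
  rwa [coeff_map, coeff_map] at this

lemma linearPart_map' {σ τ R S : Type} [Fintype σ] [Fintype τ]
    [CommRing R] [CommRing S] (χ : R →+* S) (Φ : σ → MvPowerSeries τ R) :
    linearPart (fun a => map χ (Φ a)) = (linearPart Φ).map χ := by
  ext a b
  simp [linearPart, coeff_map, Matrix.map_apply]

end MvPowerSeries

end Aux

theorem left_right_equiv_descends_of_isAlgClosed_uncountable
    (k K : Type) [Field k] [IsAlgClosed k] [Uncountable k] [Field K] [Algebra k K]
    (n m : ℕ) (hn : 1 ≤ n) (hm : 1 ≤ m)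
    (f ft : Fin m → MvPowerSeries (Fin n) k)
    (hf : ∀ i, constantCoeff (f i) = 0)
    (hft : ∀ i, constantCoeff (ft i) = 0)
    (H : ∃ (Φ : Fin n → MvPowerSeries (Fin n) K) (Ψ : Fin m → MvPowerSeries (Fin m) K),
      (∀ a, constantCoeff (Φ a) = 0) ∧
      (∀ i, constantCoeff (Ψ i) = 0) ∧
      IsUnit (linearPart Φ) ∧ IsUnit (linearPart Ψ) ∧
      (∀ i, subst' (fun l => map (algebraMap k K) (f l)) (Ψ i)
          = subst' Φ (map (algebraMap k K) (ft i)))) :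
    ∃ (Φ' : Fin n → MvPowerSeries (Fin n) k) (Ψ' : Fin m → MvPowerSeries (Fin m) k),
      (∀ a, constantCoeff (Φ' a) = 0) ∧
      (∀ i, constantCoeff (Ψ' i) = 0) ∧
      IsUnit (linearPart Φ') ∧ IsUnit (linearPart Ψ') ∧
      (∀ i, subst' f (Ψ' i) = subst' Φ' (ft i)) := by
  classical
  obtain ⟨Φ, Ψ, hΦ0, hΨ0, hΦu, hΨu, hEq⟩ := H
  have hdΦ : Matrix.det (linearPart Φ) ≠ 0 :=
    ((Matrix.isUnit_iff_isUnit_det _).mp hΦu).ne_zero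
  have hdΨ : Matrix.det (linearPart Ψ) ≠ 0 :=
    ((Matrix.isUnit_iff_isUnit_det _).mp hΨu).ne_zero
  set S : Set K := (⋃ a, Set.range (Φ a)) ∪ (⋃ i, Set.range (Ψ i)) ∪
      {(Matrix.det (linearPart Φ))⁻¹, (Matrix.det (linearPart Ψ))⁻¹} with hSdef
  have hScnt : S.Countable := by
    refine Set.Countable.union (Set.Countable.union ?_ ?_) ((Set.countable_singleton _).insert _)
    · exact Set.countable_iUnion fun a => Set.countable_range _
    · exact Set.countable_iUnion fun i => Set.countable_range _
  set A := Algebra.adjoin k S with hAdef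
  obtain ⟨φ⟩ := exists_algHom_adjoin_countable k hScnt
  -- membership of the relevant elements in A
  have hmemΦ : ∀ a (d : Fin n →₀ ℕ), Φ a d ∈ A := fun a d =>
    Algebra.subset_adjoin (by
      apply Set.mem_union_left
      exact Set.mem_union_left _ (Set.mem_iUnion.mpr ⟨a, Set.mem_range_self d⟩))
  have hmemΨ : ∀ i (d : Fin m →₀ ℕ), Ψ i d ∈ A := fun i d =>
    Algebra.subset_adjoin (by
      apply Set.mem_union_left
      exact Set.mem_union_right _ (Set.mem_iUnion.mpr ⟨i, Set.mem_range_self d⟩))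
  have hmemdΦ : (Matrix.det (linearPart Φ))⁻¹ ∈ A :=
    Algebra.subset_adjoin (Set.mem_union_right _ (Set.mem_insert _ _))
  have hmemdΨ : (Matrix.det (linearPart Ψ))⁻¹ ∈ A :=
    Algebra.subset_adjoin (Set.mem_union_right _ (Set.mem_insert_of_mem _ rfl))
  -- lifts of Φ and Ψ to A
  set Φh : Fin n → MvPowerSeries (Fin n) A := fun a d => ⟨Φ a d, hmemΦ a d⟩ with hΦh
  set Ψh : Fin m → MvPowerSeries (Fin m) A := fun i d => ⟨Ψ i d, hmemΨ i d⟩ with hΨh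
  have hvalΦ : ∀ a, map (A.val : A →+* K) (Φh a) = Φ a := by
    intro a; ext d; rw [coeff_map]; rfl
  have hvalΨ : ∀ i, map (A.val : A →+* K) (Ψh i) = Ψ i := by
    intro i; ext d; rw [coeff_map]; rfl
  have hvalmap : ∀ (σ : Type) (x : MvPowerSeries σ k),
      map (A.val : A →+* K) (map (algebraMap k A) x) = map (algebraMap k K) x := by
    intro σ x; ext d
    rw [coeff_map, coeff_map]
    exact A.val.commutes _
  have hφmap : ∀ (σ : Type) (x : MvPowerSeries σ k),
      map (φ : A →+* k) (map (algebraMap k A) x) = x := by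
    intro σ x; ext d
    rw [coeff_map, coeff_map]
    simpa using φ.commutes ((MvPowerSeries.coeff d) x)
  have hvalinj : Function.Injective (A.val : A →+* K) := Subtype.val_injective
  -- the substitution identity over A
  have key : ∀ i, subst' (fun l => map (algebraMap k A) (f l)) (Ψh i)
      = subst' Φh (map (algebraMap k A) (ft i)) := by
    intro i
    apply map_injective' (A.val : A →+* K) hvalinj
    rw [map_subst', map_subst']
    have h1 : (fun l => map (A.val : A →+* K) (map (algebraMap k A) (f l)))
        = fun l => map (algebraMap k K) (f l) := funext fun l => hvalmap _ _
    have h2 : (fun a => map (A.val : A →+* K) (Φh a)) = Φ := funext hvalΦ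
    rw [h1, h2, hvalΨ, hvalmap]
    exact hEq i
  -- push down to k
  refine ⟨fun a => map (φ : A →+* k) (Φh a),
          fun i => map (φ : A →+* k) (Ψh i), ?_, ?_, ?_, ?_, ?_⟩
  · intro a
    rw [constantCoeff_map]
    have h0 : constantCoeff (Φh a) = 0 := by
      apply hvalinj
      have : (A.val : A →+* K) (constantCoeff (Φh a))
          = constantCoeff (Φ a) := by
        rw [← hvalΦ a, constantCoeff_map]
      rw [this, hΦ0 a, map_zero]
    rw [h0, map_zero]
  · intro i
    rw [constantCoeff_map]
    have h0 : constantCoeff (Ψh i) = 0 := by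
      apply hvalinj
      have : (A.val : A →+* K) (constantCoeff (Ψh i))
          = constantCoeff (Ψ i) := by
        rw [← hvalΨ i, constantCoeff_map]
      rw [this, hΨ0 i, map_zero]
    rw [h0, map_zero]
  · -- IsUnit (linearPart Φ')
    rw [Matrix.isUnit_iff_isUnit_det, linearPart_map', ← RingHom.mapMatrix_apply,
      ← RingHom.map_det]
    refine IsUnit.map (φ : A →+* k) ?_
    refine IsUnit.of_mul_eq_one ⟨(Matrix.det (linearPart Φ))⁻¹, hmemdΦ⟩ ?_
    apply hvalinj
    have hdet : (A.val : A →+* K) (Matrix.det (linearPart Φh)) = Matrix.det (linearPart Φ) := by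
      rw [RingHom.map_det, RingHom.mapMatrix_apply, ← linearPart_map',
        show (fun a => map (A.val : A →+* K) (Φh a)) = Φ from funext hvalΦ]
    rw [map_mul, hdet, map_one]
    exact mul_inv_cancel₀ hdΦ
  · rw [Matrix.isUnit_iff_isUnit_det, linearPart_map', ← RingHom.mapMatrix_apply,
      ← RingHom.map_det]
    refine IsUnit.map (φ : A →+* k) ?_
    refine IsUnit.of_mul_eq_one ⟨(Matrix.det (linearPart Ψ))⁻¹, hmemdΨ⟩ ?_
    apply hvalinj
    have hdet : (A.val : A →+* K) (Matrix.det (linearPart Ψh)) = Matrix.det (linearPart Ψ) := by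
      rw [RingHom.map_det, RingHom.mapMatrix_apply, ← linearPart_map',
        show (fun i => map (A.val : A →+* K) (Ψh i)) = Ψ from funext hvalΨ]
    rw [map_mul, hdet, map_one]
    exact mul_inv_cancel₀ hdΨ
  · intro i
    have this : map (φ : A →+* k)
          (subst' (fun l => map (algebraMap k A) (f l)) (Ψh i))
        = map (φ : A →+* k) (subst' Φh (map (algebraMap k A) (ft i))) := by
      rw [key i]
    rw [map_subst', map_subst'] at this
    have h1 : (fun l => map (φ : A →+* k) (map (algebraMap k A) (f l))) = f :=
      funext fun l => hφmap _ _
    rw [h1, hφmap] at this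
    exact this
end
end

section
/- Let k be a commutative ring and K a commutative k-algebra which is faithfully flat as a k-module. Let W be a k-module and V ⊆ W a k-submodule. Then for every w ∈ W: if the element (1 : K) ⊗ₜ w of K ⊗[k] W lies in the base-changed submodule V.baseChange K (the image of K ⊗[k] V in K ⊗[k] W), then w ∈ V. In other words, (K ⊗ V) ∩ W = V inside K ⊗ W. -/
open TensorProduct

theorem faithfullyFlat_baseChange_inter
    (k K : Type) [CommRing k] [CommRing K] [Algebra k K]
    [Module.FaithfullyFlat k K]
    (W : Type) [AddCommGroup W] [Module k W] (V : Submodule k W) (w : W)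
    (h : (1 : K) ⊗ₜ[k] w ∈ V.baseChange K) : w ∈ V := by
  set q : W ⧸ V := Submodule.Quotient.mk w with hq
  have hker : V.baseChange K ≤ LinearMap.ker (V.mkQ.baseChange K) := by
    rw [Submodule.baseChange_eq_span, Submodule.span_le]
    rintro x ⟨v, hv, rfl⟩
    have : Submodule.Quotient.mk (p := V) v = 0 := (Submodule.Quotient.mk_eq_zero V).mpr hv
    simp [LinearMap.mem_ker, this]
  have h0 : (1 : K) ⊗ₜ[k] q = 0 := by
    have := hker h
    rw [LinearMap.mem_ker, LinearMap.baseChange_tmul] at this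
    simpa [hq] using this
  have hzero : LinearMap.toSpanSingleton k (W ⧸ V) q = 0 := by
    rw [Module.FaithfullyFlat.zero_iff_lTensor_zero k K]
    apply TensorProduct.ext'
    intro a r
    have : a ⊗ₜ[k] (r • q) = (r • a) ⊗ₜ[k] q := (TensorProduct.smul_tmul r a q).symm
    calc LinearMap.lTensor K (LinearMap.toSpanSingleton k (W ⧸ V) q) (a ⊗ₜ r)
        = a ⊗ₜ[k] (r • q) := by simp [LinearMap.toSpanSingleton]
      _ = (r • a) • ((1 : K) ⊗ₜ[k] q) := by
          rw [this, TensorProduct.smul_tmul', smul_eq_mul, mul_one]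
      _ = 0 := by rw [h0, smul_zero]
  have hq0 : q = 0 := by
    have := congrArg (fun f => f (1 : k)) hzero
    simpa [LinearMap.toSpanSingleton] using this
  rwa [hq, Submodule.Quotient.mk_eq_zero] at hq0
end

section
/- Let k be an algebraically closed field and K a nontrivial commutative k-algebra. Let S be a set of polynomials in MvPolynomial ℕ k (polynomials in countably many variables, each involving only finitely many). Suppose there exists an assignment a : ℕ → K such that the evaluation of every p ∈ S at a (via the algebra map k → K) is zero. Then for every finite subset T of S there exists an assignment b : ℕ → k such that every p ∈ T evaluates to zero at b. -/
/- The claim in the proof of Theorem 4.1(2): if a countable system of polynomial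
equations over an algebraically closed field `k` is solvable over some nonzero
`k`-algebra `K`, then every finite subsystem is solvable over `k`. -/

theorem finite_subsystem_solvable
    (k : Type) [Field k] [IsAlgClosed k]
    (K : Type) [CommRing K] [Nontrivial K] [Algebra k K]
    (S : Set (MvPolynomial ℕ k))
    (a : ℕ → K) (ha : ∀ p ∈ S, MvPolynomial.aeval a p = 0) :
    ∀ T : Finset (MvPolynomial ℕ k), ↑T ⊆ S →
      ∃ b : ℕ → k, ∀ p ∈ T, MvPolynomial.eval b p = 0 := by
  classical
  intro T hT
  set V : Finset ℕ := T.sup MvPolynomial.vars with hV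
  -- restrict each polynomial in T to the variables V
  have hq : ∀ p ∈ T, ∃ q : MvPolynomial V k,
      MvPolynomial.rename (Subtype.val : V → ℕ) q = p := by
    intro p hp
    refine MvPolynomial.exists_rename_eq_of_vars_subset_range p _
      Subtype.val_injective ?_
    intro i hi
    exact ⟨⟨i, Finset.mem_sup.2 ⟨p, hp, by simpa using hi⟩⟩, rfl⟩
  set G : Set (MvPolynomial V k) :=
    {q | MvPolynomial.rename (Subtype.val : V → ℕ) q ∈ T} with hG
  set J : Ideal (MvPolynomial V k) := Ideal.span G with hJ
  -- the ideal J is proper, since it maps into the kernel of evaluation at a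
  have hJne : J ≠ ⊤ := by
    intro htop
    have h1 : (1 : MvPolynomial V k) ∈ J := htop ▸ Submodule.mem_top
    have hker : ∀ q ∈ G, MvPolynomial.aeval (a ∘ (Subtype.val : V → ℕ)) q = 0 := by
      intro q hq'
      have := ha _ (hT hq')
      rwa [MvPolynomial.aeval_rename] at this
    have : MvPolynomial.aeval (a ∘ (Subtype.val : V → ℕ)) (1 : MvPolynomial V k) = 0 := by
      refine Submodule.span_induction (fun q hq' => hker q hq') (by simp) ?_ ?_ h1
      · intro x y _ _ hx hy; simp [hx, hy]
      · intro c x _ hx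
        rw [smul_eq_mul, map_mul, hx, mul_zero]
    simp at this
  -- weak Nullstellensatz: J has a common zero
  have hzero : (MvPolynomial.zeroLocus k J).Nonempty := by
    by_contra h
    rw [Set.not_nonempty_iff_eq_empty] at h
    have : MvPolynomial.vanishingIdeal k (MvPolynomial.zeroLocus k J) = J.radical :=
      MvPolynomial.vanishingIdeal_zeroLocus_eq_radical J
    rw [h, MvPolynomial.vanishingIdeal_empty] at this
    have h1 : (1 : MvPolynomial V k) ∈ J.radical := this ▸ Submodule.mem_top
    rw [Ideal.radical_eq_sInf] at h1
    obtain ⟨M, hM⟩ := Ideal.exists_le_maximal J hJne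
    have := Submodule.mem_sInf.1 h1 M ⟨hM.2, hM.1.isPrime⟩
    exact hM.1.ne_top (Ideal.eq_top_of_isUnit_mem M this isUnit_one)
  obtain ⟨x, hx⟩ := hzero
  refine ⟨fun n => if h : n ∈ V then x ⟨n, h⟩ else 0, ?_⟩
  intro p hp
  obtain ⟨q, hq'⟩ := hq p hp
  have hqG : q ∈ G := by rw [hG]; simp only [Set.mem_setOf_eq, hq']; exact hp
  have := hx q (Ideal.subset_span hqG)
  rw [← hq', MvPolynomial.eval_rename]
  have hcomp : ((fun n => if h : n ∈ V then x ⟨n, h⟩ else 0) ∘ (Subtype.val : V → ℕ)) = x :=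
    funext fun i => dif_pos i.2
  rw [hcomp]; exact this
end

section
/- Let k be a field of characteristic 0, n, m ≥ 1, A = MvPowerSeries (Fin n) k, B = MvPowerSeries (Fin m) k, and let f : Fin m → A be a tuple with constantCoeff f_i = 0 for all i. Then for every integer j ≥ 1 there exists an integer d ≥ 1 with the following property: whenever ξ : Derivation k A A is a k-linear derivation of A and g : Fin m → B is a tuple such that for every i the power series ξ(f_i) + MvPowerSeries.subst f (g_i) has vanishing coefficients in all total degrees < d, there exist a derivation ξ' : Derivation k A A and a tuple g' : Fin m → B such that ξ'(X_a) has vanishing coefficients in all total degrees ≤ j for every a, every g'_i has vanishing coefficients in all total degrees ≤ j, and ξ(f_i) + MvPowerSeries.subst f (g_i) = ξ'(f_i) + MvPowerSeries.subst f (g'_i) for all i. -/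
/- The Artin–Rees-type Lemma of §3.7 of the paper, in the formal case with smooth
source and target and the maximal-ideal filtration: `T_{ℒℛ}f ∩ M^{d} ⊆ T_{(ℒℛ)^{(j)}}f`
for `d = d_j ≫ j`, i.e. any tangent vector `ξ(f) + g∘f` of the left-right orbit that
vanishes in all total degrees `< d` can be rewritten with `ξ'`, `g'` in the `j`-th
filtration level of the tangent space. -/

set_option synthInstance.maxHeartbeats 1000000
set_option maxHeartbeats 1000000

noncomputable section

namespace MvPowerSeries

/-- Substitution of a tuple `g` of power series (each with zero constant coefficient)
into a power series `f`: the coefficient of the result at a multi-index `d` is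
`∑ₑ (coeff e f) · coeff d (∏ i, (g i)^(e i))`, the sum running over the (sufficient)
finite set of exponents `e` bounded by the total degree of `d`. -/
def tupleSubst {σ τ R : Type} [Fintype σ] [DecidableEq σ] [Fintype τ] [CommRing R]
    (g : σ → MvPowerSeries τ R) (f : MvPowerSeries σ R) : MvPowerSeries τ R :=
  fun d => ∑ e ∈ Finset.Iic (Finsupp.equivFunOnFinite.symm fun _ : σ => ∑ i, d i),
    MvPowerSeries.coeff e f * MvPowerSeries.coeff d (∏ i, g i ^ e i)

end MvPowerSeries

open MvPowerSeries

namespace ARtest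
open Finsupp
open MvPowerSeries Finsupp

variable {k : Type} [Field k] {n : ℕ}

/-- total degree -/
def dg {n : ℕ} (e : Fin n →₀ ℕ) : ℕ := ∑ b, e b

lemma dg_add (u v : Fin n →₀ ℕ) : dg (u + v) = dg u + dg v := by
  simp [dg, Finsupp.add_apply, Finset.sum_add_distrib]

lemma dg_eq_zero_iff (e : Fin n →₀ ℕ) : dg e = 0 ↔ e = 0 := by
  constructor
  · intro h
    ext b
    have := Finset.sum_eq_zero_iff.mp h b (Finset.mem_univ b)
    simpa using this
  · rintro rfl; simp [dg]

lemma dg_single (a : Fin n) : dg (Finsupp.single a 1) = 1 := by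
  simp [dg, Finsupp.single_apply]

/-- vanishing below total degree p -/
def Van (φ : MvPowerSeries (Fin n) k) (p : ℕ) : Prop :=
  ∀ e : Fin n →₀ ℕ, dg e < p → coeff e φ = 0

lemma van_mul {φ ψ : MvPowerSeries (Fin n) k} {p q : ℕ}
    (hφ : Van φ p) (hψ : Van ψ q) : Van (φ * ψ) (p + q) := by
  intro e he
  rw [coeff_mul]
  refine Finset.sum_eq_zero fun x hx => ?_
  rw [Finset.HasAntidiagonal.mem_antidiagonal] at hx
  have hd : dg x.1 + dg x.2 = dg e := by rw [← dg_add, hx]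
  rcases lt_or_ge (dg x.1) p with h1 | h1
  · rw [hφ _ h1, zero_mul]
  · rw [hψ _ (by omega), mul_zero]

lemma van_zero (φ : MvPowerSeries (Fin n) k) : Van φ 0 := fun _ h => absurd h (by omega)

lemma van_pow {φ : MvPowerSeries (Fin n) k} (hφ : Van φ 1) (t : ℕ) : Van (φ ^ t) t := by
  induction t with
  | zero => exact van_zero _
  | succ t ih => rw [pow_succ]; exact (by simpa using van_mul ih hφ)

lemma van_prod {ι : Type} [Fintype ι] [DecidableEq ι] {f : ι → MvPowerSeries (Fin n) k}
    (hf : ∀ i, Van (f i) 1) (e : ι →₀ ℕ) (s : Finset ι) :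
    Van (∏ i ∈ s, f i ^ e i) (∑ i ∈ s, e i) := by
  classical
  induction s using Finset.induction with
  | empty => simpa using van_zero (1 : MvPowerSeries (Fin n) k)
  | insert _ _ hx ih =>
    rw [Finset.prod_insert hx, Finset.sum_insert hx]
    exact van_mul (van_pow (hf _) _) ih


variable {k : Type} [Field k] {n : ℕ}

/-- formal partial derivative -/
def pd (a : Fin n) (φ : MvPowerSeries (Fin n) k) : MvPowerSeries (Fin n) k :=
  fun e => (e a + 1) • coeff (e + Finsupp.single a 1) φ

lemma coeff_pd (a : Fin n) (φ : MvPowerSeries (Fin n) k) (e : Fin n →₀ ℕ) :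
    coeff e (pd a φ) = (e a + 1) • coeff (e + Finsupp.single a 1) φ := rfl

lemma pd_add (a : Fin n) (φ ψ : MvPowerSeries (Fin n) k) :
    pd a (φ + ψ) = pd a φ + pd a ψ := by
  ext e
  simp [coeff_pd, map_add, smul_add]

lemma pd_smul (a : Fin n) (c : k) (φ : MvPowerSeries (Fin n) k) :
    pd a (c • φ) = c • pd a φ := by
  ext e
  simp only [coeff_pd, map_smul, smul_eq_mul, nsmul_eq_mul]
  ring

lemma pd_one (a : Fin n) : pd a (1 : MvPowerSeries (Fin n) k) = 0 := by
  ext e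
  classical
  have h : e + Finsupp.single a 1 ≠ 0 := by
    intro h
    have := congrArg (fun u => u a) h
    simp [Finsupp.add_apply, Finsupp.single_apply] at this
  simp [coeff_pd, coeff_one, h]

lemma sum_fst (a : Fin n) (e : Fin n →₀ ℕ) (F : (Fin n →₀ ℕ) × (Fin n →₀ ℕ) → k) :
    ∑ q ∈ (Finset.HasAntidiagonal.antidiagonal (e + Finsupp.single a 1) :
        Finset ((Fin n →₀ ℕ) × (Fin n →₀ ℕ))), q.1 a • F q
    = ∑ p ∈ (Finset.HasAntidiagonal.antidiagonal e : Finset ((Fin n →₀ ℕ) × (Fin n →₀ ℕ))),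
        (p.1 a + 1) • F (p.1 + Finsupp.single a 1, p.2) := by
  classical
  set δ := Finsupp.single a 1 with hδ
  set img := (Finset.HasAntidiagonal.antidiagonal e).image
    (fun p : (Fin n →₀ ℕ) × (Fin n →₀ ℕ) => (p.1 + δ, p.2)) with himg
  have hsub : img ⊆ Finset.HasAntidiagonal.antidiagonal (e + δ) := by
    intro q hq
    rw [himg, Finset.mem_image] at hq
    obtain ⟨p, hp, rfl⟩ := hq
    rw [Finset.HasAntidiagonal.mem_antidiagonal] at hp ⊢
    rw [← hp]; exact add_right_comm _ _ _
  have hvan : ∀ q ∈ Finset.HasAntidiagonal.antidiagonal (e + δ), q ∉ img →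
      (q.1 a : ℕ) • F q = 0 := by
    intro q hq hqn
    rcases Nat.eq_zero_or_pos (q.1 a) with h0 | h0
    · rw [h0, zero_smul]
    · exfalso
      apply hqn
      rw [himg, Finset.mem_image]
      have hle : δ ≤ q.1 := by
        rw [hδ]; exact Finsupp.single_le_iff.mpr h0
      refine ⟨(q.1 - δ, q.2), ?_, ?_⟩
      · rw [Finset.HasAntidiagonal.mem_antidiagonal] at hq ⊢
        rw [tsub_add_eq_add_tsub hle, hq, add_tsub_cancel_right]
      · simp [tsub_add_cancel_of_le hle]
  have hinj : ∀ x ∈ Finset.HasAntidiagonal.antidiagonal e, ∀ y ∈ Finset.HasAntidiagonal.antidiagonal e,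
      (fun p : (Fin n →₀ ℕ) × (Fin n →₀ ℕ) => (p.1 + δ, p.2)) x
      = (fun p : (Fin n →₀ ℕ) × (Fin n →₀ ℕ) => (p.1 + δ, p.2)) y → x = y := by
    intro p _ p' _ h
    have h1 := congrArg Prod.fst h
    have h2 := congrArg Prod.snd h
    simp only at h1 h2
    exact Prod.ext (add_right_cancel h1) h2
  rw [← Finset.sum_subset hsub hvan, himg, Finset.sum_image hinj]
  refine Finset.sum_congr rfl fun p _ => ?_
  have : (p.1 + δ) a = p.1 a + 1 := by
    simp [hδ, Finsupp.add_apply, Finsupp.single_apply]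
  rw [this]

lemma sum_snd (a : Fin n) (e : Fin n →₀ ℕ) (F : (Fin n →₀ ℕ) × (Fin n →₀ ℕ) → k) :
    ∑ q ∈ (Finset.HasAntidiagonal.antidiagonal (e + Finsupp.single a 1) :
        Finset ((Fin n →₀ ℕ) × (Fin n →₀ ℕ))), q.2 a • F q
    = ∑ p ∈ (Finset.HasAntidiagonal.antidiagonal e : Finset ((Fin n →₀ ℕ) × (Fin n →₀ ℕ))),
        (p.2 a + 1) • F (p.1, p.2 + Finsupp.single a 1) := by
  classical
  set δ := Finsupp.single a 1 with hδ
  set img := (Finset.HasAntidiagonal.antidiagonal e).image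
    (fun p : (Fin n →₀ ℕ) × (Fin n →₀ ℕ) => (p.1, p.2 + δ)) with himg
  have hsub : img ⊆ Finset.HasAntidiagonal.antidiagonal (e + δ) := by
    intro q hq
    rw [himg, Finset.mem_image] at hq
    obtain ⟨p, hp, rfl⟩ := hq
    rw [Finset.HasAntidiagonal.mem_antidiagonal] at hp ⊢
    rw [← hp, add_assoc]
  have hvan : ∀ q ∈ Finset.HasAntidiagonal.antidiagonal (e + δ), q ∉ img →
      (q.2 a : ℕ) • F q = 0 := by
    intro q hq hqn
    rcases Nat.eq_zero_or_pos (q.2 a) with h0 | h0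
    · rw [h0, zero_smul]
    · exfalso
      apply hqn
      rw [himg, Finset.mem_image]
      have hle : δ ≤ q.2 := by
        rw [hδ]; exact Finsupp.single_le_iff.mpr h0
      refine ⟨(q.1, q.2 - δ), ?_, ?_⟩
      · rw [Finset.HasAntidiagonal.mem_antidiagonal] at hq ⊢
        rw [← add_tsub_assoc_of_le hle, hq, add_tsub_cancel_right]
      · simp [tsub_add_cancel_of_le hle]
  have hinj : ∀ x ∈ Finset.HasAntidiagonal.antidiagonal e, ∀ y ∈ Finset.HasAntidiagonal.antidiagonal e,
      (fun p : (Fin n →₀ ℕ) × (Fin n →₀ ℕ) => (p.1, p.2 + δ)) x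
      = (fun p : (Fin n →₀ ℕ) × (Fin n →₀ ℕ) => (p.1, p.2 + δ)) y → x = y := by
    intro p _ p' _ h
    have h1 := congrArg Prod.fst h
    have h2 := congrArg Prod.snd h
    simp only at h1 h2
    exact Prod.ext h1 (add_right_cancel h2)
  rw [← Finset.sum_subset hsub hvan, himg, Finset.sum_image hinj]
  refine Finset.sum_congr rfl fun p _ => ?_
  have : (p.2 + δ) a = p.2 a + 1 := by
    simp [hδ, Finsupp.add_apply, Finsupp.single_apply]
  rw [this]

lemma pd_mul (a : Fin n) (φ ψ : MvPowerSeries (Fin n) k) :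
    pd a (φ * ψ) = pd a φ * ψ + φ * pd a ψ := by
  classical
  ext e
  rw [map_add, coeff_pd, coeff_mul, coeff_mul, coeff_mul, Finset.smul_sum]
  have hsplit : ∀ q ∈ (Finset.HasAntidiagonal.antidiagonal (e + Finsupp.single a 1) :
      Finset ((Fin n →₀ ℕ) × (Fin n →₀ ℕ))),
      (e a + 1) • (coeff q.1 φ * coeff q.2 ψ)
      = q.1 a • (coeff q.1 φ * coeff q.2 ψ) + q.2 a • (coeff q.1 φ * coeff q.2 ψ) := by
    intro q hq
    rw [Finset.HasAntidiagonal.mem_antidiagonal] at hq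
    have hqa : q.1 a + q.2 a = e a + 1 := by
      have := congrArg (fun u => u a) hq
      simpa [Finsupp.add_apply, Finsupp.single_apply] using this
    rw [← hqa, add_smul]
  rw [Finset.sum_congr rfl hsplit, Finset.sum_add_distrib,
    sum_fst a e (fun q => coeff q.1 φ * coeff q.2 ψ),
    sum_snd a e (fun q => coeff q.1 φ * coeff q.2 ψ)]
  congr 1
  · refine Finset.sum_congr rfl fun p _ => ?_
    rw [coeff_pd, smul_mul_assoc]
  · refine Finset.sum_congr rfl fun p _ => ?_
    rw [coeff_pd, mul_smul_comm]

/-- the derivation `∑ a, w a * ∂ₐ` -/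
def Dw (w : Fin n → MvPowerSeries (Fin n) k) :
    Derivation k (MvPowerSeries (Fin n) k) (MvPowerSeries (Fin n) k) where
  toFun φ := ∑ a, w a * pd a φ
  map_add' φ ψ := by
    simp only [pd_add, mul_add]
    rw [Finset.sum_add_distrib]
  map_smul' c φ := by
    simp only [pd_smul, mul_smul_comm, RingHom.id_apply]
    rw [Finset.smul_sum]
  map_one_eq_zero' := by
    simp only [LinearMap.coe_mk, AddHom.coe_mk, pd_one, mul_zero, Finset.sum_const_zero]
  leibniz' φ ψ := by
    simp only [LinearMap.coe_mk, AddHom.coe_mk, pd_mul, mul_add, smul_eq_mul,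
      Finset.mul_sum, Finset.sum_add_distrib]
    rw [add_comm]
    congr 1
    · exact Finset.sum_congr rfl fun b _ => by ring
    · exact Finset.sum_congr rfl fun b _ => by ring

lemma Dw_apply (w : Fin n → MvPowerSeries (Fin n) k) (φ : MvPowerSeries (Fin n) k) :
    Dw w φ = ∑ a, w a * pd a φ := rfl

lemma pd_X (a b : Fin n) :
    pd a (X b : MvPowerSeries (Fin n) k) = if a = b then 1 else 0 := by
  classical
  ext e
  rw [coeff_pd, coeff_X]
  by_cases hab : a = b
  · subst hab
    by_cases he : e = 0
    · subst he
      simp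
    · have hne : e + Finsupp.single a 1 ≠ Finsupp.single a 1 := by
        intro h
        exact he (by simpa using add_right_cancel (h.trans (zero_add (Finsupp.single a 1)).symm))
      simp [hne, he, coeff_one]
  · have hne : e + Finsupp.single a 1 ≠ Finsupp.single b 1 := by
      intro h
      have h2 := congrArg (fun u => u a) h
      simp only [Finsupp.add_apply, Finsupp.single_eq_same] at h2
      rw [Finsupp.single_apply, if_neg (fun hba : b = a => hab hba.symm)] at h2
      exact (Nat.succ_ne_zero _) h2
    simp [hne, hab]

lemma Dw_X (w : Fin n → MvPowerSeries (Fin n) k) (b : Fin n) :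
    Dw w (X b) = w b := by
  classical
  rw [Dw_apply]
  rw [Finset.sum_congr rfl (fun a (_ : a ∈ Finset.univ) => by rw [pd_X a b])]
  simp


variable {k : Type} [Field k] {n : ℕ}

def sel (hn : 0 < n) (e : Fin n →₀ ℕ) : Fin n :=
  if h : e.support.Nonempty then e.support.min' h else ⟨0, hn⟩

lemma sel_mem (hn : 0 < n) {e : Fin n →₀ ℕ} (he : e ≠ 0) : e (sel hn e) ≠ 0 := by
  have h : e.support.Nonempty := Finsupp.support_nonempty_iff.mpr he
  rw [sel, dif_pos h]
  exact Finsupp.mem_support_iff.mp (e.support.min'_mem h)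

def dec (hn : 0 < n) (a : Fin n) (ψ : MvPowerSeries (Fin n) k) : MvPowerSeries (Fin n) k :=
  fun β => if sel hn (β + Finsupp.single a 1) = a
    then coeff (β + Finsupp.single a 1) ψ else 0

lemma coeff_dec (hn : 0 < n) (a : Fin n) (ψ : MvPowerSeries (Fin n) k) (β : Fin n →₀ ℕ) :
    coeff β (dec hn a ψ) = if sel hn (β + Finsupp.single a 1) = a
      then coeff (β + Finsupp.single a 1) ψ else 0 := rfl

lemma coeff_X_mul' (a : Fin n) (q : MvPowerSeries (Fin n) k) (e : Fin n →₀ ℕ) :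
    coeff e (X a * q)
    = if Finsupp.single a 1 ≤ e then coeff (e - Finsupp.single a 1) q else 0 := by
  rw [X_def, coeff_monomial_mul]
  split <;> simp

lemma dec_sum (hn : 0 < n) {ψ : MvPowerSeries (Fin n) k} (hψ : coeff 0 ψ = 0) :
    ∑ a, (X a : MvPowerSeries (Fin n) k) * dec hn a ψ = ψ := by
  classical
  ext e
  rw [map_sum]
  by_cases he : e = 0
  · subst he
    rw [hψ]
    apply Finset.sum_eq_zero; intro a _
    rw [coeff_X_mul', if_neg]
    rw [Finsupp.single_le_iff]
    simp
  · rw [Finset.sum_eq_single (sel hn e)]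
    · have hle : Finsupp.single (sel hn e) 1 ≤ e :=
        Finsupp.single_le_iff.mpr (Nat.one_le_iff_ne_zero.mpr (sel_mem hn he))
      rw [coeff_X_mul', if_pos hle, coeff_dec, tsub_add_cancel_of_le hle, if_pos rfl]
    · intro a _ ha
      rw [coeff_X_mul']
      split
      · rw [coeff_dec, tsub_add_cancel_of_le (by assumption), if_neg (fun h => ha h.symm)]
      · rfl
    · intro h
      exact absurd (Finset.mem_univ _) h

lemma eta_vanish (hn : 0 < n)
    (η : Derivation k (MvPowerSeries (Fin n) k) (MvPowerSeries (Fin n) k))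
    (hX : ∀ a, η (X a) = 0) :
    ∀ N (ψ : MvPowerSeries (Fin n) k), coeff 0 ψ = 0 →
      ∀ e, dg e < N → coeff e (η ψ) = 0 := by
  intro N
  induction N with
  | zero => intro ψ _ e he; omega
  | succ N ih =>
    intro ψ hψ e he
    conv_lhs => rw [← dec_sum hn hψ]
    rw [map_sum, map_sum]
    apply Finset.sum_eq_zero; intro a _
    have hlb : η ((X a : MvPowerSeries (Fin n) k) * dec hn a ψ)
        = X a * η (dec hn a ψ) := by
      rw [Derivation.leibniz, hX a, smul_zero, add_zero, smul_eq_mul]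
    rw [hlb, coeff_X_mul']
    split
    · next hle =>
      set q := dec hn a ψ with hq
      have hqc : η q = η (q - C (coeff 0 q)) := by
        rw [map_sub, c_eq_algebraMap, Derivation.map_algebraMap, sub_zero]
      rw [hqc]
      apply ih
      · rw [map_sub, coeff_zero_C, sub_self]
      · have : dg e = dg (e - Finsupp.single a 1) + 1 := by
          conv_lhs => rw [← tsub_add_cancel_of_le hle]
          rw [dg_add, dg_single]
        omega
    · rfl

lemma derivation_eq_Dw (hn : 0 < n)
    (ξ : Derivation k (MvPowerSeries (Fin n) k) (MvPowerSeries (Fin n) k))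
    (φ : MvPowerSeries (Fin n) k) :
    ξ φ = ∑ a, ξ (X a) * pd a φ := by
  set η := ξ - Dw (fun a => ξ (X a)) with hη
  have hX : ∀ a, η (X a) = 0 := by
    intro a
    rw [hη, Derivation.sub_apply, Dw_X, sub_self]
  have hzero : η φ = 0 := by
    ext e
    have h1 : η φ = η (φ - C (coeff 0 φ)) := by
      rw [map_sub, c_eq_algebraMap, Derivation.map_algebraMap, sub_zero]
    rw [h1, map_zero]
    apply eta_vanish hn η hX (dg e + 1)
    · rw [map_sub, coeff_zero_C, sub_self]
    · omega
  have := sub_eq_zero.mp (by rw [← Derivation.sub_apply, ← hη, hzero] :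
    ξ φ - Dw (fun a => ξ (X a)) φ = 0)
  rw [this, Dw_apply]

variable {m : ℕ}

lemma coeff_subst (f : Fin m → MvPowerSeries (Fin n) k) (g : MvPowerSeries (Fin m) k)
    (d : Fin n →₀ ℕ) :
    coeff d (tupleSubst f g) = ∑ e ∈ Finset.Iic (Finsupp.equivFunOnFinite.symm
      fun _ : Fin m => ∑ i, d i), coeff e g * coeff d (∏ i, f i ^ e i) := rfl

lemma subst_add (f : Fin m → MvPowerSeries (Fin n) k) (g g' : MvPowerSeries (Fin m) k) :
    tupleSubst f (g + g') = tupleSubst f g + tupleSubst f g' := by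
  ext d
  rw [map_add, coeff_subst, coeff_subst, coeff_subst, ← Finset.sum_add_distrib]
  refine Finset.sum_congr rfl fun e _ => ?_
  rw [map_add, add_mul]

lemma subst_smul (f : Fin m → MvPowerSeries (Fin n) k) (c : k) (g : MvPowerSeries (Fin m) k) :
    tupleSubst f (c • g) = c • tupleSubst f g := by
  ext d
  rw [map_smul, coeff_subst, coeff_subst, Finset.smul_sum]
  refine Finset.sum_congr rfl fun e _ => ?_
  rw [map_smul, smul_eq_mul, smul_eq_mul, mul_assoc]

lemma subst_van {f : Fin m → MvPowerSeries (Fin n) k} (hf1 : ∀ i, Van (f i) 1)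
    {g : MvPowerSeries (Fin m) k} {p : ℕ} (hg : Van g p) : Van (tupleSubst f g) p := by
  intro d hd
  rw [coeff_subst]
  refine Finset.sum_eq_zero fun e _ => ?_
  rcases lt_or_ge (dg e) p with h1 | h1
  · rw [hg e h1, zero_mul]
  · have hvp := van_prod hf1 e Finset.univ
    rw [hvp d (by exact lt_of_lt_of_le hd h1), mul_zero]

/-- the combined linear map `(w, g) ↦ (∑ₐ wₐ ∂ₐ fᵢ + g i ∘ f)ᵢ` -/
def Psi (f : Fin m → MvPowerSeries (Fin n) k) :
    ((Fin n → MvPowerSeries (Fin n) k) × (Fin m → MvPowerSeries (Fin m) k))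
      →ₗ[k] (Fin m → MvPowerSeries (Fin n) k) where
  toFun p := fun i => (∑ a, p.1 a * pd a (f i)) + tupleSubst f (p.2 i)
  map_add' p q := by
    funext i
    simp only [Prod.fst_add, Prod.snd_add, Pi.add_apply, add_mul, pd_add, subst_add,
      Finset.sum_add_distrib]
    abel
  map_smul' c p := by
    funext i
    simp only [Prod.smul_fst, Prod.smul_snd, Pi.smul_apply, smul_mul_assoc, subst_smul,
      RingHom.id_apply, smul_add, Finset.smul_sum]

lemma Psi_apply (f : Fin m → MvPowerSeries (Fin n) k) (p) (i : Fin m) :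
    Psi f p i = (∑ a, p.1 a * pd a (f i)) + tupleSubst f (p.2 i) := rfl

/-- tuples vanishing in all total degrees `< c` -/
def Vsub (c : ℕ) : Submodule k (Fin m → MvPowerSeries (Fin n) k) where
  carrier := {v | ∀ i e, dg e < c → coeff e (v i) = 0}
  add_mem' := by
    intro v w hv hw i e he
    rw [Pi.add_apply, map_add, hv i e he, hw i e he, add_zero]
  zero_mem' := by intro i e _; simp
  smul_mem' := by
    intro c v hv i e he
    rw [Pi.smul_apply, map_smul, hv i e he, smul_zero]

lemma mem_Vsub {c : ℕ} {v : Fin m → MvPowerSeries (Fin n) k} :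
    v ∈ (Vsub c : Submodule k (Fin m → MvPowerSeries (Fin n) k))
      ↔ ∀ i e, dg e < c → coeff e (v i) = 0 := Iff.rfl

lemma Vsub_antitone {c c' : ℕ} (h : c ≤ c') :
    (Vsub c' : Submodule k (Fin m → MvPowerSeries (Fin n) k)) ≤ Vsub c :=
  fun _ hv i e he => hv i e (lt_of_lt_of_le he h)

/-- pairs in filtration level `r`: all coefficients in total degrees `≤ r` vanish -/
def Lev (r : ℕ) :
    Submodule k ((Fin n → MvPowerSeries (Fin n) k) × (Fin m → MvPowerSeries (Fin m) k)) where
  carrier := {p | (∀ a e, dg e ≤ r → coeff e (p.1 a) = 0)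
    ∧ (∀ i e, dg e ≤ r → coeff e (p.2 i) = 0)}
  add_mem' := by
    rintro p q ⟨hp1, hp2⟩ ⟨hq1, hq2⟩
    constructor
    · intro a e he
      rw [Prod.fst_add, Pi.add_apply, map_add, hp1 a e he, hq1 a e he, add_zero]
    · intro i e he
      rw [Prod.snd_add, Pi.add_apply, map_add, hp2 i e he, hq2 i e he, add_zero]
  zero_mem' := by constructor <;> intro _ _ _ <;> simp
  smul_mem' := by
    rintro c p ⟨hp1, hp2⟩
    constructor
    · intro a e he
      rw [Prod.smul_fst, Pi.smul_apply, map_smul, hp1 a e he, smul_zero]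
    · intro i e he
      rw [Prod.smul_snd, Pi.smul_apply, map_smul, hp2 i e he, smul_zero]

lemma mem_Lev {r : ℕ} {p : (Fin n → MvPowerSeries (Fin n) k) × (Fin m → MvPowerSeries (Fin m) k)} :
    p ∈ (Lev r : Submodule k _) ↔ (∀ a e, dg e ≤ r → coeff e (p.1 a) = 0)
      ∧ (∀ i e, dg e ≤ r → coeff e (p.2 i) = 0) := Iff.rfl

/-- pairs supported in total degrees `≤ r` -/
def Pol (r : ℕ) :
    Submodule k ((Fin n → MvPowerSeries (Fin n) k) × (Fin m → MvPowerSeries (Fin m) k)) where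
  carrier := {p | (∀ a e, r < dg e → coeff e (p.1 a) = 0)
    ∧ (∀ i e, r < dg e → coeff e (p.2 i) = 0)}
  add_mem' := by
    rintro p q ⟨hp1, hp2⟩ ⟨hq1, hq2⟩
    constructor
    · intro a e he
      rw [Prod.fst_add, Pi.add_apply, map_add, hp1 a e he, hq1 a e he, add_zero]
    · intro i e he
      rw [Prod.snd_add, Pi.add_apply, map_add, hp2 i e he, hq2 i e he, add_zero]
  zero_mem' := by constructor <;> intro _ _ _ <;> simp
  smul_mem' := by
    rintro c p ⟨hp1, hp2⟩
    constructor
    · intro a e he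
      rw [Prod.smul_fst, Pi.smul_apply, map_smul, hp1 a e he, smul_zero]
    · intro i e he
      rw [Prod.smul_snd, Pi.smul_apply, map_smul, hp2 i e he, smul_zero]

/-- bound multi-index with all entries `r` -/
def br (N r : ℕ) : Fin N →₀ ℕ := Finsupp.equivFunOnFinite.symm (fun _ => r)

lemma le_br {N r : ℕ} {e : Fin N →₀ ℕ} (h : dg e ≤ r) : e ∈ Finset.Iic (br N r) := by
  rw [Finset.mem_Iic]
  intro b
  refine le_trans ?_ h
  rw [dg]
  exact Finset.single_le_sum (fun _ _ => Nat.zero_le _) (Finset.mem_univ b)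

/-- evaluation of all coefficients of total degree `≤ r` -/
def Jmap (r : ℕ) :
    ((Fin n → MvPowerSeries (Fin n) k) × (Fin m → MvPowerSeries (Fin m) k))
      →ₗ[k] ((Fin n × {x // x ∈ Finset.Iic (br n r)} → k)
        × (Fin m × {x // x ∈ Finset.Iic (br m r)} → k)) where
  toFun p := (fun q => coeff (q.2 : Fin n →₀ ℕ) (p.1 q.1),
    fun q => coeff (q.2 : Fin m →₀ ℕ) (p.2 q.1))
  map_add' p q := by
    refine Prod.ext ?_ ?_ <;> funext x <;>
      simp [Prod.fst_add, Prod.snd_add, Pi.add_apply, map_add]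
  map_smul' c p := by
    refine Prod.ext ?_ ?_ <;> funext x <;>
      simp [Prod.smul_fst, Prod.smul_snd, Pi.smul_apply, map_smul]

lemma Pol_finite (r : ℕ) :
    Module.Finite k
      (↥(Pol r : Submodule k ((Fin n → MvPowerSeries (Fin n) k)
        × (Fin m → MvPowerSeries (Fin m) k)))) := by
  apply Module.Finite.of_injective ((Jmap r).comp (Pol r : Submodule k _).subtype)
  rintro ⟨p, hp⟩ ⟨q, hq⟩ h
  apply Subtype.ext
  have h1 := congrArg Prod.fst h
  have h2 := congrArg Prod.snd h
  simp only [LinearMap.comp_apply, Submodule.subtype_apply, Jmap, LinearMap.coe_mk,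
    AddHom.coe_mk] at h1 h2
  refine Prod.ext ?_ ?_
  · funext a
    ext e
    rcases le_or_gt (dg e) r with hr | hr
    · exact congrFun h1 (a, ⟨e, le_br hr⟩)
    · rw [hp.1 a e hr, hq.1 a e hr]
  · funext i
    ext e
    rcases le_or_gt (dg e) r with hr | hr
    · exact congrFun h2 (i, ⟨e, le_br hr⟩)
    · rw [hp.2 i e hr, hq.2 i e hr]

/-- the key uniform-degree lemma -/
lemma key (f : Fin m → MvPowerSeries (Fin n) k) (r : ℕ) :
    ∃ dr : ℕ, r + 1 ≤ dr ∧ ∀ c'' : ℕ,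
      (LinearMap.range (Psi f) ⊓ Vsub dr : Submodule k _)
        ≤ (Lev r).map (Psi f) ⊔ Vsub c'' := by
  classical
  set G : Submodule k (Fin m → MvPowerSeries (Fin n) k) :=
    LinearMap.range ((Psi f).comp (Pol r : Submodule k _).subtype) with hG
  haveI : Module.Finite k (↥(Pol r : Submodule k ((Fin n → MvPowerSeries (Fin n) k)
      × (Fin m → MvPowerSeries (Fin m) k)))) := Pol_finite r
  haveI : IsArtinian k (↥(Pol r : Submodule k ((Fin n → MvPowerSeries (Fin n) k)
      × (Fin m → MvPowerSeries (Fin m) k)))) := isArtinian_of_fg_of_artinian'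
  haveI : IsArtinian k (↥G) := by
    rw [hG]; exact isArtinian_range _
  set QQ : ℕ → Submodule k (↥G) :=
    fun c => ((Lev r).map (Psi f) ⊔ Vsub c).comap G.subtype with hQQ
  have hQQmono : ∀ c c' : ℕ, c ≤ c' → QQ c' ≤ QQ c := by
    intro c c' hcc
    exact Submodule.comap_mono (sup_le_sup_left (Vsub_antitone hcc) _)
  obtain ⟨c0, hc0⟩ := IsArtinian.monotone_stabilizes
    (⟨fun c => OrderDual.toDual (QQ c), fun c c' hcc => hQQmono c c' hcc⟩ :
      ℕ →o (Submodule k (↥G))ᵒᵈ)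
  refine ⟨max c0 (r + 1), le_max_right _ _, ?_⟩
  intro c'' v hv
  obtain ⟨hvT, hvV⟩ := hv
  obtain ⟨p, hp⟩ := hvT
  -- split p into low and high parts
  set plo : (Fin n → MvPowerSeries (Fin n) k) × (Fin m → MvPowerSeries (Fin m) k) :=
    ((fun a => (fun e => if dg e ≤ r then coeff e (p.1 a) else 0 :
        MvPowerSeries (Fin n) k)),
     (fun i => (fun e => if dg e ≤ r then coeff e (p.2 i) else 0 :
        MvPowerSeries (Fin m) k))) with hplo
  have hploPol : plo ∈ (Pol r : Submodule k _) := by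
    constructor
    · intro a e he
      have h0 : coeff e (plo.1 a) = if dg e ≤ r then coeff e (p.1 a) else 0 := rfl
      rw [h0, if_neg (by omega)]
    · intro i e he
      have h0 : coeff e (plo.2 i) = if dg e ≤ r then coeff e (p.2 i) else 0 := rfl
      rw [h0, if_neg (by omega)]
  have hphiLev : p - plo ∈ (Lev r : Submodule k _) := by
    constructor
    · intro a e he
      rw [Prod.fst_sub, Pi.sub_apply, map_sub]
      have h0 : coeff e (plo.1 a) = if dg e ≤ r then coeff e (p.1 a) else 0 := rfl
      rw [h0, if_pos he, sub_self]
    · intro i e he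
      rw [Prod.snd_sub, Pi.sub_apply, map_sub]
      have h0 : coeff e (plo.2 i) = if dg e ≤ r then coeff e (p.2 i) else 0 := rfl
      rw [h0, if_pos he, sub_self]
  set u := Psi f plo with hu
  have huG : u ∈ G := ⟨⟨plo, hploPol⟩, rfl⟩
  have hphiN : Psi f (p - plo) ∈ (Lev r).map (Psi f) :=
    Submodule.mem_map_of_mem hphiLev
  have husup : u ∈ (Lev r).map (Psi f) ⊔ Vsub (max c0 (r + 1)) := by
    have h0 : u = v - Psi f (p - plo) := by
      rw [hu, map_sub, hp, sub_sub_cancel]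
    rw [h0]
    exact sub_mem (Submodule.mem_sup_right hvV) (Submodule.mem_sup_left hphiN)
  -- stabilization
  have hstab : QQ (max c0 (r + 1)) = QQ (max c0 c'') := by
    have e1 := hc0 _ (le_max_left c0 (r + 1))
    have e2 := hc0 _ (le_max_left c0 c'')
    exact congrArg OrderDual.ofDual (e1.symm.trans e2)
  have humem : (⟨u, huG⟩ : ↥G) ∈ QQ (max c0 (r + 1)) := by
    rw [hQQ]
    exact husup
  have humem2 : (⟨u, huG⟩ : ↥G) ∈ QQ (max c0 c'') := by rw [← hstab]; exact humem
  have husup2 : u ∈ (Lev r).map (Psi f) ⊔ Vsub (max c0 c'') := by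
    rw [hQQ] at humem2
    exact humem2
  have husup3 : u ∈ (Lev r).map (Psi f) ⊔ Vsub c'' :=
    SetLike.le_def.mp (sup_le_sup_left (Vsub_antitone (le_max_right c0 c'')) _) husup2
  have hveq : v = Psi f (p - plo) + u := by
    rw [hu, ← map_add, sub_add_cancel, hp]
  rw [hveq]
  exact add_mem (Submodule.mem_sup_left hphiN) husup3

lemma Psi_van {f : Fin m → MvPowerSeries (Fin n) k} (hf1 : ∀ i, Van (f i) 1)
    {q : (Fin n → MvPowerSeries (Fin n) k) × (Fin m → MvPowerSeries (Fin m) k)} {R : ℕ}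
    (hq : q ∈ (Lev R : Submodule k _)) :
    ∀ i e, dg e ≤ R → coeff e (Psi f q i) = 0 := by
  intro i e he
  rw [Psi_apply, map_add]
  have h1 : coeff e (∑ a, q.1 a * pd a (f i)) = 0 := by
    rw [map_sum]
    refine Finset.sum_eq_zero fun a _ => ?_
    have hv1 : Van (q.1 a) (R + 1) := fun e' he' => hq.1 a e' (by omega)
    have := van_mul hv1 (van_zero (pd a (f i)))
    rw [add_zero] at this
    exact this e (by omega)
  have h2 : Van (q.2 i) (R + 1) := fun e' he' => hq.2 i e' (by omega)
  rw [h1, subst_van hf1 h2 e (by omega), add_zero]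

/-- the main approximation lemma -/
lemma main (f : Fin m → MvPowerSeries (Fin n) k) (hf1 : ∀ i, Van (f i) 1) (j : ℕ) :
    ∃ d : ℕ, 1 ≤ d ∧ ∀ v : Fin m → MvPowerSeries (Fin n) k,
      v ∈ LinearMap.range (Psi f) → v ∈ (Vsub d : Submodule k _) →
      ∃ p, p ∈ (Lev j : Submodule k _) ∧ Psi f p = v := by
  classical
  choose dd hdd1 hdd2 using key f
  refine ⟨dd j, by have := hdd1 j; omega, ?_⟩
  intro v hvT hvV
  -- one-step refinement, made total
  have hstep : ∀ (r : ℕ) (v' : Fin m → MvPowerSeries (Fin n) k),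
      ∃ p, v' ∈ LinearMap.range (Psi f) ⊓ Vsub (dd r) →
        (p ∈ (Lev r : Submodule k _) ∧
          v' - Psi f p ∈ LinearMap.range (Psi f) ⊓ Vsub (dd (r + 1))) := by
    intro r v'
    by_cases h : v' ∈ LinearMap.range (Psi f) ⊓ Vsub (dd r)
    · have hmem := hdd2 r (dd (r + 1)) h
      rw [Submodule.mem_sup] at hmem
      obtain ⟨y, hy, z, hz, hyz⟩ := hmem
      obtain ⟨p, hp, rfl⟩ := hy
      refine ⟨p, fun _ => ⟨hp, ?_, ?_⟩⟩
      · exact sub_mem h.1 (LinearMap.mem_range_self _ p)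
      · have : v' - Psi f p = z := by rw [← hyz]; abel
        rw [this]; exact hz
    · exact ⟨0, fun hm => absurd hm h⟩
  choose P hP using hstep
  let vs : ℕ → (Fin m → MvPowerSeries (Fin n) k) :=
    fun s => Nat.rec v (fun s prev => prev - Psi f (P (j + s) prev)) s
  have hvs0 : vs 0 = v := rfl
  have hvsS : ∀ s, vs (s + 1) = vs s - Psi f (P (j + s) (vs s)) := fun s => rfl
  have hInv : ∀ s, vs s ∈ LinearMap.range (Psi f) ⊓ Vsub (dd (j + s)) := by
    intro s
    induction s with
    | zero => exact ⟨hvT, hvV⟩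
    | succ s ih =>
      rw [hvsS s]
      exact (hP (j + s) (vs s) ih).2
  set W : ℕ → (Fin n → MvPowerSeries (Fin n) k) × (Fin m → MvPowerSeries (Fin m) k) :=
    fun s => P (j + s) (vs s) with hWdef
  have hW : ∀ s, W s ∈ (Lev (j + s) : Submodule k _) := fun s => (hP _ _ (hInv s)).1
  have hsum : ∀ S, v - vs S = ∑ s ∈ Finset.range S, Psi f (W s) := by
    intro S
    induction S with
    | zero => rw [hvs0]; simp
    | succ S ih =>
      rw [Finset.sum_range_succ, ← ih, hvsS S]
      abel
  -- the limit pair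
  set p' : (Fin n → MvPowerSeries (Fin n) k) × (Fin m → MvPowerSeries (Fin m) k) :=
    ((fun a => (fun e => ∑ s ∈ Finset.range (dg e), coeff e ((W s).1 a) :
        MvPowerSeries (Fin n) k)),
     (fun i => (fun e => ∑ s ∈ Finset.range (dg e), coeff e ((W s).2 i) :
        MvPowerSeries (Fin m) k))) with hp'
  have hc1 : ∀ a e, coeff e (p'.1 a) = ∑ s ∈ Finset.range (dg e), coeff e ((W s).1 a) :=
    fun a e => rfl
  have hc2 : ∀ i e, coeff e (p'.2 i) = ∑ s ∈ Finset.range (dg e), coeff e ((W s).2 i) :=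
    fun i e => rfl
  have hp'Lev : p' ∈ (Lev j : Submodule k _) := by
    constructor
    · intro a e he
      rw [hc1]
      exact Finset.sum_eq_zero fun s _ => (hW s).1 a e (by omega)
    · intro i e he
      rw [hc2]
      exact Finset.sum_eq_zero fun s _ => (hW s).2 i e (by omega)
  have hWvan1 : ∀ s a e, dg e ≤ s → coeff e ((W s).1 a) = 0 :=
    fun s a e he => (hW s).1 a e (by omega)
  have hWvan2 : ∀ s i e, dg e ≤ s → coeff e ((W s).2 i) = 0 :=
    fun s i e he => (hW s).2 i e (by omega)
  have hdiffLev : ∀ R, p' - ∑ s ∈ Finset.range R, W s ∈ (Lev R : Submodule k _) := by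
    intro R
    have hfst : (∑ s ∈ Finset.range R, W s).1 = ∑ s ∈ Finset.range R, (W s).1 :=
      map_sum (LinearMap.fst k _ _) W (Finset.range R)
    have hsnd : (∑ s ∈ Finset.range R, W s).2 = ∑ s ∈ Finset.range R, (W s).2 :=
      map_sum (LinearMap.snd k _ _) W (Finset.range R)
    constructor
    · intro a e he
      rw [Prod.fst_sub, Pi.sub_apply, map_sub, hc1, hfst, Finset.sum_apply, map_sum]
      rw [← Finset.sum_subset (Finset.range_subset_range.mpr (by omega : dg e ≤ R))
        (fun s _ hs => hWvan1 s a e (by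
          simp only [Finset.mem_range, not_lt] at hs ⊢
          omega))]
      exact sub_self _
    · intro i e he
      rw [Prod.snd_sub, Pi.sub_apply, map_sub, hc2, hsnd, Finset.sum_apply, map_sum]
      rw [← Finset.sum_subset (Finset.range_subset_range.mpr (by omega : dg e ≤ R))
        (fun s _ hs => hWvan2 s i e (by
          simp only [Finset.mem_range, not_lt] at hs ⊢
          omega))]
      exact sub_self _
  refine ⟨p', hp'Lev, ?_⟩
  funext i
  ext e
  set R := dg e + 1 with hR
  have hsplit : coeff e (Psi f p' i)
      = coeff e (Psi f (∑ s ∈ Finset.range R, W s) i)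
        + coeff e (Psi f (p' - ∑ s ∈ Finset.range R, W s) i) := by
    rw [← map_add, ← Pi.add_apply, ← map_add, add_sub_cancel]
  rw [hsplit, Psi_van hf1 (hdiffLev R) i e (by omega), add_zero, map_sum]
  have : (∑ s ∈ Finset.range R, Psi f (W s)) i = ∑ s ∈ Finset.range R, Psi f (W s) i :=
    Finset.sum_apply i _ _
  rw [this, map_sum, ← map_sum, ← Finset.sum_apply i _ (fun s => Psi f (W s)), ← hsum R]
  rw [Pi.sub_apply, map_sub, (hInv R).2 i e (by have := hdd1 (j + R); omega), sub_zero]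

end ARtest


theorem artinRees_leftRight_tangent_space
    (k : Type) [Field k] [CharZero k]
    (n m : ℕ) (hn : 1 ≤ n) (hm : 1 ≤ m)
    (f : Fin m → MvPowerSeries (Fin n) k)
    (hf : ∀ i, constantCoeff (f i) = 0)
    (j : ℕ) (hj : 1 ≤ j) :
    ∃ d : ℕ, 1 ≤ d ∧
      ∀ (ξ : Derivation k (MvPowerSeries (Fin n) k) (MvPowerSeries (Fin n) k))
        (g : Fin m → MvPowerSeries (Fin m) k),
        (∀ (i : Fin m) (e : Fin n →₀ ℕ), (∑ b, e b) < d →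
          coeff e (ξ (f i) + tupleSubst f (g i)) = 0) →
        ∃ (ξ' : Derivation k (MvPowerSeries (Fin n) k) (MvPowerSeries (Fin n) k))
          (g' : Fin m → MvPowerSeries (Fin m) k),
          (∀ (a : Fin n) (e : Fin n →₀ ℕ), (∑ b, e b) ≤ j → coeff e (ξ' (X a)) = 0) ∧
          (∀ (i : Fin m) (e : Fin m →₀ ℕ), (∑ b, e b) ≤ j → coeff e (g' i) = 0) ∧
          (∀ i, ξ (f i) + tupleSubst f (g i) = ξ' (f i) + tupleSubst f (g' i)) := by
  classical
  have hn0 : 0 < n := hn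
  have hf1 : ∀ i, ARtest.Van (f i) 1 := by
    intro i e he
    have he0 : e = 0 := (ARtest.dg_eq_zero_iff e).mp (by omega)
    subst he0
    rw [coeff_zero_eq_constantCoeff_apply]
    exact hf i
  obtain ⟨d, hd1, hmain⟩ := ARtest.main f hf1 j
  refine ⟨d, hd1, ?_⟩
  intro ξ g hcoeff
  have hvT : (fun i => ξ (f i) + tupleSubst f (g i)) ∈ LinearMap.range (ARtest.Psi f) := by
    refine ⟨((fun a => ξ (X a)), g), ?_⟩
    funext i
    rw [ARtest.Psi_apply, ← ARtest.derivation_eq_Dw hn0 ξ (f i)]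
  have hvV : (fun i => ξ (f i) + tupleSubst f (g i)) ∈ (ARtest.Vsub d : Submodule k _) := by
    intro i e he
    exact hcoeff i e he
  obtain ⟨p', hLev, hEq⟩ := hmain _ hvT hvV
  refine ⟨ARtest.Dw p'.1, p'.2, ?_, ?_, ?_⟩
  · intro a e he
    rw [ARtest.Dw_X]
    exact hLev.1 a e he
  · intro i e he
    exact hLev.2 i e he
  · intro i
    have h2 : ARtest.Dw p'.1 (f i) = ∑ a, p'.1 a * ARtest.pd a (f i) :=
      ARtest.Dw_apply p'.1 (f i)
    have h3 : ξ (f i) + tupleSubst f (g i) = (fun i => ξ (f i) + tupleSubst f (g i)) i := rfl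
    rw [h3, ← hEq, ARtest.Psi_apply, h2]
end
end

section
/- Let k be a commutative ring, c ∈ k, and j ≥ 1 an integer. (a) If there exists a formal power series Φ ∈ PowerSeries k with c·Φ = c·X + X^{j+1}, then c is a unit of k; in particular, if c is not a unit, the map x ↦ c·x + x^{j+1} is not right-equivalent over k to the map x ↦ c·x. (b) If c is not a zero divisor and K = Localization.Away c, then there exists Φ ∈ PowerSeries K with constant coefficient 0, coefficient of X equal to 1, coefficients of X^2,…,X^j equal to 0, and (algebraMap k K c)·Φ = (algebraMap k K c)·X + X^{j+1}; hence over K the two maps are ℛ^{(j)}-equivalent. -/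
/- Sharpness example (iii) of §4.2.1: for a non-unit non-zerodivisor `c` in a ring
`k`, the germs `c·x` and `c·x + x^{j+1}` are `ℛ^{(j)}`-equivalent over the
(non-faithfully-flat) extension `K = k[1/c]` but not right-equivalent over `k`;
so faithful flatness cannot be dropped in Theorem 4.1(1). -/

open PowerSeries

theorem sharpness_nonFaithfullyFlat
    (k : Type) [CommRing k] (c : k) (j : ℕ) (hj : 1 ≤ j) :
    -- (a) solvability of `c·Φ = c·X + X^{j+1}` over `k` forces `c` to be a unit
    ((∃ Φ : PowerSeries k,
        PowerSeries.C c * Φ = PowerSeries.C c * PowerSeries.X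
          + PowerSeries.X ^ (j + 1)) → IsUnit c) ∧
    -- in particular, if `c` is not a unit then `c·x + x^{j+1}` is not
    -- right-equivalent to `c·x` over `k`
    (¬ IsUnit c → ¬ ∃ Φ : PowerSeries k,
        PowerSeries.constantCoeff Φ = 0 ∧ IsUnit (PowerSeries.coeff 1 Φ) ∧
        PowerSeries.C c * Φ = PowerSeries.C c * PowerSeries.X
          + PowerSeries.X ^ (j + 1)) ∧
    -- (b) over `K = k[1/c]` the two germs are `ℛ^{(j)}`-equivalent
    (c ∈ nonZeroDivisors k →
      ∃ Φ : PowerSeries (Localization.Away c),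
        PowerSeries.constantCoeff Φ = 0 ∧
        PowerSeries.coeff 1 Φ = 1 ∧
        (∀ i : ℕ, 2 ≤ i → i ≤ j → PowerSeries.coeff i Φ = 0) ∧
        PowerSeries.C (algebraMap k (Localization.Away c) c) * Φ =
          PowerSeries.C (algebraMap k (Localization.Away c) c)
            * PowerSeries.X + PowerSeries.X ^ (j + 1)) := by
  have ha : (∃ Φ : PowerSeries k,
      PowerSeries.C c * Φ = PowerSeries.C c * PowerSeries.X
        + PowerSeries.X ^ (j + 1)) → IsUnit c := by
    rintro ⟨Φ, hΦ⟩
    have h := congrArg (PowerSeries.coeff (j + 1)) hΦ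
    simp only [map_add, PowerSeries.coeff_C_mul, PowerSeries.coeff_X,
      PowerSeries.coeff_X_pow, if_pos rfl] at h
    have hne : j + 1 ≠ 1 := by omega
    rw [if_neg hne, mul_zero, zero_add] at h
    exact IsUnit.of_mul_eq_one _ h
  refine ⟨ha, ?_, ?_⟩
  · intro hc ⟨Φ, _, _, hΦ⟩
    exact hc (ha ⟨Φ, hΦ⟩)
  · intro hc
    set K := Localization.Away c
    set u : K := IsLocalization.Away.invSelf c with hu
    refine ⟨PowerSeries.X + PowerSeries.C u * PowerSeries.X ^ (j + 1), ?_, ?_, ?_, ?_⟩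
    · simp
    · have hne : j + 1 ≠ 1 := by omega
      have h1 : (1:ℕ) ≠ j + 1 := by omega
      simp only [map_add, PowerSeries.coeff_C_mul, PowerSeries.coeff_X_pow, if_neg h1,
        mul_zero, add_zero, PowerSeries.coeff_one_X]
    · intro i h2 hij
      have h1 : i ≠ 1 := by omega
      have h2' : i ≠ j + 1 := by omega
      simp [PowerSeries.coeff_X, PowerSeries.coeff_X_pow, h1, h2']
    · have : algebraMap k K c * u = 1 := IsLocalization.Away.mul_invSelf c
      rw [mul_add, ← mul_assoc, ← map_mul, this, map_one, one_mul]
end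

section
/- Let k be a field of characteristic p > 0, let c ∈ k, and let j ≥ 1 be an integer. Then there exists a formal power series Φ ∈ PowerSeries k with constant coefficient 0, unit coefficient of X, and Φ^p = X^p + c·X^{(j+1)·p}, if and only if c is a p-th power in k (there exists b ∈ k with b^p = c). -/
open PowerSeries

lemma coeff_pow_char_aux (k : Type) [Field k] (p : ℕ) (hp : p.Prime) [CharP k p]
    (Φ : PowerSeries k) (n : ℕ) :
    PowerSeries.coeff (n * p) (Φ ^ p) = (PowerSeries.coeff n Φ) ^ p := by
  haveI : Fact p.Prime := ⟨hp⟩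
  haveI : CharP (PowerSeries k) p :=
    charP_of_injective_ringHom (PowerSeries.C_injective (R := k)) p
  have hp0 : 0 < p := hp.pos
  set N := n + 1 with hN
  set A : Polynomial k := Φ.trunc N with hA
  set B : PowerSeries k := Φ - (A : PowerSeries k) with hB
  have hXB : (PowerSeries.X : PowerSeries k) ^ N ∣ B := by
    rw [PowerSeries.X_pow_dvd_iff]
    intro m hm
    rw [hB, map_sub, Polynomial.coeff_coe, PowerSeries.coeff_trunc, if_pos hm, sub_self]
  have hsplit : Φ = (A : PowerSeries k) + B := by rw [hB]; ring
  have hBpow : PowerSeries.coeff (n * p) (B ^ p) = 0 := by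
    have : (PowerSeries.X : PowerSeries k) ^ (N * p) ∣ B ^ p := by
      rw [pow_mul]
      exact pow_dvd_pow_of_dvd hXB p
    rw [PowerSeries.X_pow_dvd_iff] at this
    exact this _ (by exact (Nat.mul_lt_mul_right hp0).mpr (Nat.lt_succ_self n))
  have hApow : PowerSeries.coeff (n * p) ((A : PowerSeries k) ^ p)
      = (PowerSeries.coeff n Φ) ^ p := by
    rw [← Polynomial.coe_pow, Polynomial.coeff_coe, ← Polynomial.map_frobenius_expand (p := p) A,
      Polynomial.coeff_map, Polynomial.coeff_expand hp0, if_pos (dvd_mul_left p n),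
      Nat.mul_div_cancel _ hp0, frobenius_def]
    congr 1
    rw [hA, ← Polynomial.coeff_coe, Polynomial.coeff_coe, PowerSeries.coeff_trunc,
      if_pos (Nat.lt_succ_self n)]
  calc PowerSeries.coeff (n * p) (Φ ^ p)
      = PowerSeries.coeff (n * p) ((A : PowerSeries k) ^ p + B ^ p) := by
        rw [hsplit, add_pow_char]
    _ = (PowerSeries.coeff n Φ) ^ p := by rw [map_add, hApow, hBpow, add_zero]

/- Sharpness example (ii) of §4.2.1: over a field `k` of characteristic `p > 0`,
the germs `x^p` and `x^p + c·x^{(j+1)p}` are right-equivalent over `k` (by a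
coordinate change with zero constant coefficient and unit linear coefficient)
iff `c` is a `p`-th power in `k`. -/

theorem sharpness_positive_char
    (k : Type) [Field k] (p : ℕ) (hp : p.Prime) [CharP k p]
    (c : k) (j : ℕ) (hj : 1 ≤ j) :
    (∃ Φ : PowerSeries k,
        PowerSeries.constantCoeff Φ = 0 ∧
        IsUnit (PowerSeries.coeff 1 Φ) ∧
        Φ ^ p = PowerSeries.X ^ p
          + PowerSeries.C c * PowerSeries.X ^ ((j + 1) * p)) ↔
    ∃ b : k, b ^ p = c := by
  haveI : Fact p.Prime := ⟨hp⟩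
  haveI : CharP (PowerSeries k) p :=
    charP_of_injective_ringHom (PowerSeries.C_injective (R := k)) p
  have hp0 : 0 < p := hp.pos
  constructor
  · rintro ⟨Φ, -, -, hΦ⟩
    refine ⟨PowerSeries.coeff (j + 1) Φ, ?_⟩
    have h := coeff_pow_char_aux k p hp Φ (j + 1)
    rw [hΦ] at h
    rw [← h, map_add]
    have h1 : PowerSeries.coeff ((j + 1) * p) (PowerSeries.X ^ p : PowerSeries k) = 0 := by
      rw [PowerSeries.coeff_X_pow, if_neg]
      intro hcon
      have : (j + 1) * p = 1 * p := by omega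
      have := Nat.eq_of_mul_eq_mul_right hp0 this
      omega
    have h2 : PowerSeries.coeff ((j + 1) * p)
        (PowerSeries.C c * PowerSeries.X ^ ((j + 1) * p)) = c := by
      rw [PowerSeries.coeff_C_mul, PowerSeries.coeff_X_pow, if_pos rfl, mul_one]
    rw [h1, h2, zero_add]
  · rintro ⟨b, hb⟩
    refine ⟨PowerSeries.X + PowerSeries.C b * PowerSeries.X ^ (j + 1), ?_, ?_, ?_⟩
    · simp
    · have : PowerSeries.coeff 1
          (PowerSeries.X + PowerSeries.C b * PowerSeries.X ^ (j + 1) : PowerSeries k) = 1 := by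
        rw [map_add, PowerSeries.coeff_one_X, PowerSeries.coeff_C_mul,
          PowerSeries.coeff_X_pow, if_neg (by omega), mul_zero, add_zero]
      rw [this]; exact isUnit_one
    · rw [add_pow_char, mul_pow, ← map_pow, hb, ← pow_mul]
end

section
/- Let k be a field of characteristic p > 0 and let c ∈ k. Then there exists a formal power series Φ ∈ PowerSeries k with constant coefficient 0 and Φ^p = c·X^p if and only if c is a p-th power in k (there exists b ∈ k with b^p = c). -/
/- Sharpness example (i) of §4.2.1: over a field `k` of characteristic `p > 0`,
the germ `c·x^p` is right-equivalent to `x^p` over `k` iff `c` is a `p`-th power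
in `k` (over the algebraic closure it always is). -/

theorem sharpness_j_zero_char_p
    (k : Type) [Field k] (p : ℕ) (hp : p.Prime) [CharP k p] (c : k) :
    (∃ Φ : PowerSeries k,
        PowerSeries.constantCoeff Φ = 0 ∧
        Φ ^ p = PowerSeries.C c * PowerSeries.X ^ p) ↔
    ∃ b : k, b ^ p = c := by
  constructor
  · rintro ⟨Φ, h0, hΦ⟩
    obtain ⟨ψ, hψ⟩ := (PowerSeries.X_dvd_iff).2 h0
    refine ⟨PowerSeries.constantCoeff ψ, ?_⟩
    have hcancel : ψ ^ p = PowerSeries.C c := by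
      have hXp : (PowerSeries.X : PowerSeries k) ^ p ≠ 0 :=
        pow_ne_zero _ PowerSeries.X_ne_zero
      have : PowerSeries.X ^ p * ψ ^ p = PowerSeries.X ^ p * PowerSeries.C c := by
        rw [← mul_pow, ← hψ, hΦ, mul_comm]
      exact mul_left_cancel₀ hXp this
    have := congrArg (PowerSeries.constantCoeff) hcancel
    simpa using this
  · rintro ⟨b, hb⟩
    refine ⟨PowerSeries.C b * PowerSeries.X, by simp, ?_⟩
    rw [mul_pow, ← map_pow, hb]
end
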